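/- arXiv:1310.8271 — 5 statements merged into one kernel-verified Lean document; each statement's English description precedes it below -/
import Mathlib

section
/- Let (λ_n)_{n≥0} be a square-summable sequence of complex numbers such that for every square-summable complex sequence (a_n)_{n≥0} one has the contraction inequality ∑_{n=0}^∞ |∑_{j=0}^n a_j λ_{n-j}|² ≤ ∑_{n=0}^∞ |a_n|². Then the power series φ(z) = ∑_{n=0}^∞ λ_n z^n converges for every complex z with |z| < 1, and |φ(z)| ≤ 1 for all |z| < 1. -/
open Finset

private lemma aux_cauchy_product (f g : ℕ → ℂ) (hf : Summable fun n => ‖f n‖)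
    (hg : Summable fun n => ‖g n‖) :
    (∑' n : ℕ, f n) * ∑' n : ℕ, g n
      = ∑' n : ℕ, ∑ k ∈ Finset.range (n + 1), f k * g (n - k) :=
  tsum_mul_tsum_eq_tsum_sum_range_of_summable_norm hf hg

set_option maxHeartbeats 4000000 in
/-- If `(λ_n)` is square-summable and the Cauchy product with any square-summable
sequence `(a_n)` satisfies the contraction inequality
`∑_n |∑_{j=0}^n a_j λ_{n-j}|² ≤ ∑_n |a_n|²`, then the power series `∑ λ_n z^n`
converges on the open unit disk and its sum is bounded by one there. -/
theorem contraction_implies_bounded_by_one (l : ℕ → ℂ)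
    (hl : Summable fun n => ‖l n‖ ^ 2)
    (hcontr : ∀ a : ℕ → ℂ, Summable (fun n => ‖a n‖ ^ 2) →
      ∑' n : ℕ, ‖∑ j ∈ Finset.range (n + 1), a j * l (n - j)‖ ^ 2 ≤ ∑' n : ℕ, ‖a n‖ ^ 2) :
    ∀ z : ℂ, ‖z‖ < 1 →
      Summable (fun n : ℕ => l n * z ^ n) ∧ ‖∑' n : ℕ, l n * z ^ n‖ ≤ 1 := by
  intro z hz
  set s : ℝ := ‖z‖ with hsdef
  have hs0 : 0 ≤ s := norm_nonneg z
  have hs1 : s < 1 := hz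
  have hs2 : s ^ 2 < 1 := by nlinarith
  have hs20 : (0:ℝ) ≤ s ^ 2 := sq_nonneg s
  have hgeo : Summable (fun n : ℕ => s ^ n) := summable_geometric_of_lt_one hs0 hs1
  have hgeo2 : Summable (fun n : ℕ => (s ^ 2) ^ n) :=
    summable_geometric_of_lt_one hs20 hs2
  -- norms of the terms of the main series
  have hnorm : ∀ n : ℕ, ‖l n * z ^ n‖ = ‖l n‖ * s ^ n := by
    intro n; rw [norm_mul, norm_pow]
  -- summability of the norms of the main series
  have hbs : Summable fun n => ‖l n * z ^ n‖ := by
    refine Summable.of_nonneg_of_le (f := fun n => (‖l n‖ ^ 2 + (s ^ 2) ^ n) / 2)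
      (fun n => norm_nonneg _) (fun n => ?_) ?_
    ·
      rw [hnorm n]
      have h : ‖l n‖ * s ^ n ≤ (‖l n‖ ^ 2 + (s ^ n) ^ 2) / 2 := by nlinarith [sq_nonneg (‖l n‖ - s ^ n)]
      calc ‖l n‖ * s ^ n ≤ (‖l n‖ ^ 2 + (s ^ n) ^ 2) / 2 := h
        _ = (‖l n‖ ^ 2 + (s ^ 2) ^ n) / 2 := by ring
    · exact ((hl.add hgeo2).div_const 2)
  have hsummain : Summable (fun n : ℕ => l n * z ^ n) := Summable.of_norm hbs
  refine ⟨hsummain, ?_⟩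
  -- the test sequence
  set a : ℕ → ℂ := fun j => (starRingEnd ℂ z) ^ j with hadef
  have hanorm : ∀ j, ‖a j‖ = s ^ j := by
    intro j
    show ‖(starRingEnd ℂ z) ^ j‖ = s ^ j
    rw [norm_pow, RCLike.norm_conj, ← hsdef]
  have ha2 : Summable fun n => ‖a n‖ ^ 2 := by
    apply hgeo2.congr
    intro n
    rw [hanorm n]
    ring
  -- the Cauchy product sequence
  set c : ℕ → ℂ := fun n => ∑ j ∈ Finset.range (n + 1), a j * l (n - j) with hcdef
  -- pointwise bound on ‖c n‖
  have hcb : ∀ n, ‖c n‖ ≤ ∑ j ∈ Finset.range (n + 1), s ^ j * ‖l (n - j)‖ := by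
    intro n
    refine (norm_sum_le _ _).trans_eq ?_
    apply Finset.sum_congr rfl
    intro j _
    rw [norm_mul, hanorm j]
  -- Young-type bound: ‖c n‖ ^ 2 ≤ (1-s)⁻¹ * D n
  set D : ℕ → ℝ := fun n => ∑ j ∈ Finset.range (n + 1), s ^ j * ‖l (n - j)‖ ^ 2 with hDdef
  have hDnonneg : ∀ n, 0 ≤ D n := by
    intro n
    apply Finset.sum_nonneg
    intro j _
    positivity
  have hDsum : Summable D := by
    have h := summable_norm_sum_mul_range_of_summable_norm
      (f := fun j : ℕ => (s ^ j : ℝ)) (g := fun m : ℕ => ‖l m‖ ^ 2)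
      (by simpa [abs_of_nonneg, pow_nonneg hs0] using hgeo)
      (by
        apply hl.congr
        intro n
        simp [abs_of_nonneg, sq_nonneg])
    apply Summable.of_norm
    apply h.congr
    intro n
    rfl
  have hgeosum : ∀ n : ℕ, ∑ j ∈ Finset.range (n + 1), s ^ j ≤ (1 - s)⁻¹ := by
    intro n
    have := Summable.sum_le_tsum (Finset.range (n + 1)) (fun i _ => by positivity) hgeo
    rwa [tsum_geometric_of_lt_one hs0 hs1] at this
  have hc2bound : ∀ n, ‖c n‖ ^ 2 ≤ (1 - s)⁻¹ * D n := by
    intro n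
    have h1 : ‖c n‖ ^ 2 ≤ (∑ j ∈ Finset.range (n + 1), s ^ j * ‖l (n - j)‖) ^ 2 := by
      apply pow_le_pow_left₀ (norm_nonneg _) (hcb n)
    have h2 : (∑ j ∈ Finset.range (n + 1), s ^ j * ‖l (n - j)‖) ^ 2
        ≤ (∑ j ∈ Finset.range (n + 1), s ^ j) * D n := by
      have := Finset.sum_mul_sq_le_sq_mul_sq (Finset.range (n + 1))
        (fun j => Real.sqrt s ^ j) (fun j => Real.sqrt s ^ j * ‖l (n - j)‖)
      have hsq : ∀ j : ℕ, Real.sqrt s ^ j * Real.sqrt s ^ j = s ^ j := by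
        intro j
        rw [← mul_pow, Real.mul_self_sqrt hs0]
      calc (∑ j ∈ Finset.range (n + 1), s ^ j * ‖l (n - j)‖) ^ 2
          = (∑ j ∈ Finset.range (n + 1),
              (Real.sqrt s ^ j) * (Real.sqrt s ^ j * ‖l (n - j)‖)) ^ 2 := by
            congr 1
            apply Finset.sum_congr rfl
            intro j _
            rw [← mul_assoc, hsq j]
        _ ≤ (∑ j ∈ Finset.range (n + 1), (Real.sqrt s ^ j) ^ 2)
              * ∑ j ∈ Finset.range (n + 1), (Real.sqrt s ^ j * ‖l (n - j)‖) ^ 2 := this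
        _ = (∑ j ∈ Finset.range (n + 1), s ^ j) * D n := by
            congr 1
            · apply Finset.sum_congr rfl
              intro j _
              rw [sq, hsq j]
            · apply Finset.sum_congr rfl
              intro j _
              rw [mul_pow, sq (Real.sqrt s ^ j), hsq j]
    have h3 : (∑ j ∈ Finset.range (n + 1), s ^ j) * D n ≤ (1 - s)⁻¹ * D n :=
      mul_le_mul_of_nonneg_right (hgeosum n) (hDnonneg n)
    linarith
  have hc2 : Summable fun n => ‖c n‖ ^ 2 :=
    Summable.of_nonneg_of_le (fun n => sq_nonneg _) hc2bound (hDsum.mul_left _)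
  -- contraction bound
  have hB : ∑' n : ℕ, ‖a n‖ ^ 2 = (1 - s ^ 2)⁻¹ := by
    have h : ∀ n : ℕ, ‖a n‖ ^ 2 = (s ^ 2) ^ n := by
      intro n
      rw [hanorm n]
      ring
    rw [tsum_congr h]
    exact tsum_geometric_of_lt_one hs20 hs2
  have hA : ∑' n : ℕ, ‖c n‖ ^ 2 ≤ (1 - s ^ 2)⁻¹ := by
    have := hcontr a ha2
    rwa [hB] at this
  set B : ℝ := (1 - s ^ 2)⁻¹ with hBdef
  have hBpos : 0 < B := by
    rw [hBdef]
    have : (0:ℝ) < 1 - s ^ 2 := by nlinarith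
    exact inv_pos.mpr this
  -- Cauchy–Schwarz for the tsum
  have hcs : Summable fun n => ‖c n‖ * s ^ n := by
    refine Summable.of_nonneg_of_le (f := fun n => (‖c n‖ ^ 2 + (s ^ 2) ^ n) / 2)
      (fun n => by positivity) (fun n => ?_) ?_
    ·
      have : (s ^ 2) ^ n = (s ^ n) ^ 2 := by rw [← pow_mul, ← pow_mul, Nat.mul_comm]
      nlinarith [sq_nonneg (‖c n‖ - s ^ n)]
    · exact (hc2.add hgeo2).div_const 2
  have hCS : ∑' n : ℕ, ‖c n‖ * s ^ n ≤ B := by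
    apply Summable.tsum_le_of_sum_le hcs
    intro F
    have h1 : (∑ n ∈ F, ‖c n‖ * s ^ n) ^ 2 ≤ (∑ n ∈ F, ‖c n‖ ^ 2) * ∑ n ∈ F, (s ^ n) ^ 2 :=
      Finset.sum_mul_sq_le_sq_mul_sq F _ _
    have h2 : ∑ n ∈ F, ‖c n‖ ^ 2 ≤ B :=
      le_trans (Summable.sum_le_tsum F (fun i _ => sq_nonneg _) hc2) hA
    have h3 : ∑ n ∈ F, (s ^ n) ^ 2 ≤ B := by
      have h4 : ∑ n ∈ F, (s ^ 2) ^ n ≤ B := by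
        have := Summable.sum_le_tsum F (fun i _ => by positivity) hgeo2
        rwa [tsum_geometric_of_lt_one hs20 hs2] at this
      calc ∑ n ∈ F, (s ^ n) ^ 2 = ∑ n ∈ F, (s ^ 2) ^ n := by
            apply Finset.sum_congr rfl
            intro n _
            ring
        _ ≤ B := h4
    have h5 : (∑ n ∈ F, ‖c n‖ * s ^ n) ^ 2 ≤ B * B := by
      calc (∑ n ∈ F, ‖c n‖ * s ^ n) ^ 2 ≤ (∑ n ∈ F, ‖c n‖ ^ 2) * ∑ n ∈ F, (s ^ n) ^ 2 := h1
        _ ≤ B * B := by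
            apply mul_le_mul h2 h3 (Finset.sum_nonneg fun i _ => sq_nonneg _) hBpos.le
    nlinarith [Finset.sum_nonneg (s := F) (f := fun n => ‖c n‖ * s ^ n)
      (fun i _ => by positivity)]
  -- Cauchy product identity
  set w : ℂ := (starRingEnd ℂ z) * z with hwdef
  have hwnorm : ‖w‖ = s ^ 2 := by
    rw [hwdef, norm_mul, RCLike.norm_conj, sq]
  have hw1 : ‖w‖ < 1 := by rw [hwnorm]; exact hs2
  have hfn : Summable fun j : ℕ => ‖w ^ j‖ := by
    apply (summable_geometric_of_lt_one hs20 hs2).congr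
    intro n
    rw [norm_pow, hwnorm]
  have hprod : (∑' j : ℕ, w ^ j) * ∑' n : ℕ, l n * z ^ n
      = ∑' n : ℕ, ∑ k ∈ Finset.range (n + 1), w ^ k * (l (n - k) * z ^ (n - k)) :=
    aux_cauchy_product _ _ hfn hbs
  have hkey : (∑' j : ℕ, w ^ j) * ∑' n : ℕ, l n * z ^ n = ∑' n : ℕ, c n * z ^ n := by
    rw [hprod]
    apply tsum_congr
    intro n
    rw [hcdef, Finset.sum_mul]
    apply Finset.sum_congr rfl
    intro k hk
    have hkn : k ≤ n := Nat.lt_succ_iff.mp (Finset.mem_range.mp hk)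
    rw [hwdef, hadef]
    have : z ^ k * z ^ (n - k) = z ^ n := by
      rw [← pow_add, Nat.add_sub_cancel' hkn]
    calc ((starRingEnd ℂ) z * z) ^ k * (l (n - k) * z ^ (n - k))
        = (starRingEnd ℂ z) ^ k * l (n - k) * (z ^ k * z ^ (n - k)) := by ring
      _ = (starRingEnd ℂ z) ^ k * l (n - k) * z ^ n := by rw [this]
  -- value of the geometric tsum
  have hwval : ∑' j : ℕ, w ^ j = (1 - w)⁻¹ := tsum_geometric_of_norm_lt_one hw1
  have hwBnorm : ‖(1 - w)⁻¹‖ = B := by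
    have : w = ((s ^ 2 : ℝ) : ℂ) := by
      rw [hwdef, mul_comm, Complex.mul_conj, Complex.normSq_eq_norm_sq]
    rw [this, show (1 : ℂ) - ((s ^ 2 : ℝ) : ℂ) = ((1 - s ^ 2 : ℝ) : ℂ) by push_cast; ring,
      ← Complex.ofReal_inv, Complex.norm_real, Real.norm_of_nonneg hBpos.le]
  -- bound on the Cauchy product tsum
  have hcznorm : Summable fun n => ‖c n * z ^ n‖ := by
    apply hcs.congr
    intro n
    rw [norm_mul, norm_pow]
  have hbound : ‖∑' n : ℕ, c n * z ^ n‖ ≤ B := by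
    calc ‖∑' n : ℕ, c n * z ^ n‖ ≤ ∑' n : ℕ, ‖c n * z ^ n‖ := norm_tsum_le_tsum_norm hcznorm
      _ = ∑' n : ℕ, ‖c n‖ * s ^ n := tsum_congr fun n => by rw [norm_mul, norm_pow]
      _ ≤ B := hCS
  -- put it together
  have hfinal : ‖∑' n : ℕ, l n * z ^ n‖ * B ≤ B := by
    calc ‖∑' n : ℕ, l n * z ^ n‖ * B = ‖(1 - w)⁻¹ * ∑' n : ℕ, l n * z ^ n‖ := by
          rw [norm_mul, hwBnorm, mul_comm]
      _ = ‖∑' n : ℕ, c n * z ^ n‖ := by rw [← hwval, hkey]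
      _ ≤ B := hbound
  have h1 : ‖∑' n : ℕ, l n * z ^ n‖ * B ≤ 1 * B := by
    rw [one_mul]
    exact hfinal
  exact le_of_mul_le_mul_right h1 hBpos
end

section
/- Let φ be an analytic function on the open unit disk 𝔻 = {z ∈ ℂ : |z| < 1} with |φ(z)| ≤ 1 for all z ∈ 𝔻, and let (λ_n)_{n≥0} be its Taylor coefficients at 0, i.e. φ(z) = ∑_{n=0}^∞ λ_n z^n for z ∈ 𝔻. Assume moreover that ∑_{n=0}^∞ |λ_n|² = 1. Then (λ_n) satisfies condition (c): for every square-summable complex sequence (a_n)_{n≥0}, ∑_{n=0}^∞ |∑_{j=0}^n a_j λ_{n-j}|² = ∑_{n=0}^∞ |a_n|². -/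
open Complex Finset
open scoped ComplexInnerProductSpace ENNReal

lemma key_orth (M : ℕ) (hM : 0 < M) {n n' : ℕ} (hn : n < M) (hn' : n' < M) :
    ∑ k ∈ Finset.range M,
      (Complex.exp (2 * Real.pi * Complex.I / M)) ^ (k * n) *
        (starRingEnd ℂ) ((Complex.exp (2 * Real.pi * Complex.I / M)) ^ (k * n')) =
      if n = n' then (M : ℂ) else 0 := by
  set W : ℂ := Complex.exp (2 * Real.pi * Complex.I / M) with hW
  have hprim : IsPrimitiveRoot W M := Complex.isPrimitiveRoot_exp M hM.ne'
  have hWne : W ≠ 0 := Complex.exp_ne_zero _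
  have hconj : (starRingEnd ℂ) W = W⁻¹ := by
    rw [hW, ← Complex.exp_conj]
    rw [← Complex.exp_neg]
    congr 1
    simp [map_div₀, Complex.conj_I, map_ofNat, Complex.conj_ofReal]
    ring
  have hterm : ∀ k : ℕ, W ^ (k * n) * (starRingEnd ℂ) (W ^ (k * n')) =
      (W ^ ((n : ℤ) - (n' : ℤ))) ^ k := by
    intro k
    rw [map_pow, hconj, ← zpow_natCast W, ← zpow_natCast W⁻¹, inv_zpow, ← zpow_neg,
      ← zpow_add₀ hWne, ← zpow_natCast (W ^ ((n : ℤ) - (n' : ℤ))), ← zpow_mul]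
    congr 1
    push_cast
    ring
  simp only [hterm]
  by_cases h : n = n'
  · simp [h]
  · rw [if_neg h]
    have hζne : W ^ ((n : ℤ) - (n' : ℤ)) ≠ 1 := by
      rw [Ne, hprim.zpow_eq_one_iff_dvd]
      intro hdvd
      have h0 : (n : ℤ) - (n' : ℤ) = 0 := by
        refine Int.eq_zero_of_abs_lt_dvd hdvd ?_
        rw [abs_sub_lt_iff]
        omega
      omega
    rw [geom_sum_eq hζne]
    have : (W ^ ((n : ℤ) - (n' : ℤ))) ^ M = 1 := by
      rw [← zpow_natCast, ← zpow_mul, mul_comm, zpow_mul, zpow_natCast, hprim.pow_eq_one,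
        one_zpow]
    rw [this, sub_self, zero_div]

lemma norm_sq_cast (z : ℂ) : ((‖z‖ ^ 2 : ℝ) : ℂ) = z * (starRingEnd ℂ) z := by
  rw [Complex.mul_conj]
  norm_cast
  rw [Complex.normSq_eq_norm_sq]

lemma discrete_parseval (M L : ℕ) (hLM : L ≤ M) (hM : 0 < M) (μ : ℕ → ℂ) (r : ℝ) :
    ∑ k ∈ Finset.range M,
        ‖∑ n ∈ Finset.range L, μ n * ((r : ℂ) * Complex.exp (2 * Real.pi * Complex.I / M) ^ k) ^ n‖ ^ 2
      = M * ∑ n ∈ Finset.range L, ‖μ n‖ ^ 2 * r ^ (2 * n) := by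
  set W : ℂ := Complex.exp (2 * Real.pi * Complex.I / M) with hW
  set P : ℕ → ℂ := fun k => ∑ n ∈ Finset.range L, μ n * ((r : ℂ) * W ^ k) ^ n with hP
  have key : ∀ k, P k * (starRingEnd ℂ) (P k) =
      ∑ n ∈ Finset.range L, ∑ n' ∈ Finset.range L,
        (μ n * (starRingEnd ℂ) (μ n') * (r : ℂ) ^ (n + n')) *
          (W ^ (k * n) * (starRingEnd ℂ) (W ^ (k * n'))) := by
    intro k
    rw [hP, map_sum, Finset.sum_mul_sum]
    refine Finset.sum_congr rfl fun n _ => Finset.sum_congr rfl fun n' _ => ?_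
    simp only [map_mul, map_pow, Complex.conj_ofReal]
    ring
  have main : ∑ k ∈ Finset.range M, P k * (starRingEnd ℂ) (P k) =
      (M : ℂ) * ∑ n ∈ Finset.range L, μ n * (starRingEnd ℂ) (μ n) * (r : ℂ) ^ (2 * n) := by
    simp only [key]
    rw [Finset.sum_comm]
    have : ∀ n ∈ Finset.range L,
        ∑ k ∈ Finset.range M, ∑ n' ∈ Finset.range L,
          (μ n * (starRingEnd ℂ) (μ n') * (r : ℂ) ^ (n + n')) *
            (W ^ (k * n) * (starRingEnd ℂ) (W ^ (k * n'))) =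
        (M : ℂ) * (μ n * (starRingEnd ℂ) (μ n) * (r : ℂ) ^ (2 * n)) := by
      intro n hn
      rw [Finset.sum_comm]
      have hnM : n < M := lt_of_lt_of_le (Finset.mem_range.mp hn) hLM
      have step : ∀ n' ∈ Finset.range L,
          ∑ k ∈ Finset.range M,
            (μ n * (starRingEnd ℂ) (μ n') * (r : ℂ) ^ (n + n')) *
              (W ^ (k * n) * (starRingEnd ℂ) (W ^ (k * n'))) =
          if n = n' then (μ n * (starRingEnd ℂ) (μ n') * (r : ℂ) ^ (n + n')) * M else 0 := by
        intro n' hn'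
        rw [← Finset.mul_sum, key_orth M hM hnM (lt_of_lt_of_le (Finset.mem_range.mp hn') hLM)]
        split_ifs with h
        · rfl
        · rw [mul_zero]
      rw [Finset.sum_congr rfl step, Finset.sum_ite_eq (Finset.range L) n
        (fun n' => (μ n * (starRingEnd ℂ) (μ n') * (r : ℂ) ^ (n + n')) * M), if_pos hn]
      rw [two_mul]
      ring
    rw [Finset.sum_congr rfl this, ← Finset.mul_sum]
  have cast1 : ((∑ k ∈ Finset.range M, ‖P k‖ ^ 2 : ℝ) : ℂ)
      = ∑ k ∈ Finset.range M, P k * (starRingEnd ℂ) (P k) := by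
    push_cast
    refine Finset.sum_congr rfl fun k _ => ?_
    rw [← norm_sq_cast (P k)]
    push_cast
    ring
  have cast2 : (((M : ℝ) * ∑ n ∈ Finset.range L, ‖μ n‖ ^ 2 * r ^ (2 * n) : ℝ) : ℂ)
      = (M : ℂ) * ∑ n ∈ Finset.range L, μ n * (starRingEnd ℂ) (μ n) * (r : ℂ) ^ (2 * n) := by
    push_cast
    rw [Finset.mul_sum, Finset.mul_sum]
    refine Finset.sum_congr rfl fun n _ => ?_
    rw [← norm_sq_cast (μ n)]
    push_cast
    ring
  exact_mod_cast cast1.trans (main.trans cast2.symm)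

lemma psi_hasSum (φ : ℂ → ℂ) (l : ℕ → ℂ)
    (htaylor : ∀ z : ℂ, ‖z‖ < 1 → HasSum (fun n : ℕ => l n * z ^ n) (φ z))
    (m : ℕ) (c : ℂ) {z : ℂ} (hz : ‖z‖ < 1) :
    HasSum (fun n : ℕ => (l n + c * (if m ≤ n then l (n - m) else 0)) * z ^ n)
      ((1 + c * z ^ m) * φ z) := by
  have h1 : HasSum (fun n : ℕ => (if m ≤ n then l (n - m) else 0) * z ^ n) (z ^ m * φ z) := by
    have h2 : HasSum (fun n : ℕ => (if m ≤ n + m then l (n + m - m) else 0) * z ^ (n + m))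
        (z ^ m * φ z) := by
      have h := (htaylor z hz).mul_left (z ^ m)
      refine HasSum.congr_fun h fun n => ?_
      simp [pow_add]
      ring
    have hzero : ∑ i ∈ Finset.range m, (if m ≤ i then l (i - m) else 0) * z ^ i = 0 := by
      refine Finset.sum_eq_zero fun i hi => ?_
      rw [if_neg (Finset.mem_range.mp hi).not_ge, zero_mul]
    have h2' : HasSum (fun n : ℕ => (if m ≤ n + m then l (n + m - m) else 0) * z ^ (n + m))
        (z ^ m * φ z - ∑ i ∈ Finset.range m, (if m ≤ i then l (i - m) else 0) * z ^ i) := by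
      rw [hzero, sub_zero]; exact h2
    exact (hasSum_nat_add_iff' m).mp h2'
  have hadd := (htaylor z hz).add (h1.mul_left c)
  have heq : (1 + c * z ^ m) * φ z = φ z + c * (z ^ m * φ z) := by ring
  rw [heq]
  exact HasSum.congr_fun hadd fun n => by ring

lemma tail_bound (φ : ℂ → ℂ) (l : ℕ → ℂ)
    (htaylor : ∀ z : ℂ, ‖z‖ < 1 → HasSum (fun n : ℕ => l n * z ^ n) (φ z))
    (hl1 : ∀ n, ‖l n‖ ≤ 1) (m : ℕ) (c : ℂ) {z : ℂ} (hz : ‖z‖ < 1) (L : ℕ) :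
    ‖(1 + c * z ^ m) * φ z -
        ∑ n ∈ Finset.range L, (l n + c * (if m ≤ n then l (n - m) else 0)) * z ^ n‖
      ≤ (1 + ‖c‖) * ‖z‖ ^ L / (1 - ‖z‖) := by
  set μ : ℕ → ℂ := fun n => l n + c * (if m ≤ n then l (n - m) else 0) with hμ
  have hμ1 : ∀ n, ‖μ n‖ ≤ 1 + ‖c‖ := by
    intro n
    refine (norm_add_le _ _).trans ?_
    have h2 : ‖c * (if m ≤ n then l (n - m) else 0)‖ ≤ ‖c‖ := by
      rw [norm_mul]
      refine (mul_le_mul_of_nonneg_left ?_ (norm_nonneg c)).trans (le_of_eq (mul_one _))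
      split_ifs with h
      · exact hl1 _
      · simp
    have := hl1 n
    linarith
  have hψ := psi_hasSum φ l htaylor m c hz
  have htail : HasSum (fun n : ℕ => μ (n + L) * z ^ (n + L))
      ((1 + c * z ^ m) * φ z - ∑ n ∈ Finset.range L, μ n * z ^ n) :=
    (hasSum_nat_add_iff' L).mpr hψ
  rw [← htail.tsum_eq]
  have hzpos : (0:ℝ) ≤ ‖z‖ := norm_nonneg z
  have hgeom : Summable (fun n : ℕ => (1 + ‖c‖) * ‖z‖ ^ (n + L)) := by
    apply Summable.mul_left
    exact (summable_geometric_of_lt_one hzpos hz).comp_injective (add_left_injective L)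
  have hle : ∀ n : ℕ, ‖μ (n + L) * z ^ (n + L)‖ ≤ (1 + ‖c‖) * ‖z‖ ^ (n + L) := by
    intro n
    rw [norm_mul, norm_pow]
    exact mul_le_mul_of_nonneg_right (hμ1 _) (pow_nonneg hzpos _)
  have hsumm : Summable (fun n : ℕ => ‖μ (n + L) * z ^ (n + L)‖) :=
    Summable.of_nonneg_of_le (fun n => norm_nonneg _) hle hgeom
  calc ‖∑' n : ℕ, μ (n + L) * z ^ (n + L)‖ ≤ ∑' n : ℕ, ‖μ (n + L) * z ^ (n + L)‖ :=
        norm_tsum_le_tsum_norm hsumm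
    _ ≤ ∑' n : ℕ, (1 + ‖c‖) * ‖z‖ ^ (n + L) := Summable.tsum_le_tsum hle hsumm hgeom
    _ = (1 + ‖c‖) * ‖z‖ ^ L / (1 - ‖z‖) := by
        rw [tsum_mul_left]
        have : ∑' n : ℕ, ‖z‖ ^ (n + L) = ‖z‖ ^ L / (1 - ‖z‖) := by
          simp_rw [pow_add, mul_comm (‖z‖ ^ (_ : ℕ)) (‖z‖ ^ L)]
          rw [tsum_mul_left, tsum_geometric_of_lt_one hzpos hz, div_eq_mul_inv]
        rw [this, mul_div_assoc]

lemma sum_two {α : Type*} [AddCommMonoid α] (m : ℕ) (hm : 0 < m) (a b : ℕ → α) :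
    ∑ n ∈ Finset.range (m + 1), (if n = 0 then a n else if n = m then b n else 0)
      = a 0 + b m := by
  have h : ∀ n ∈ Finset.range (m + 1),
      (if n = 0 then a n else if n = m then b n else 0)
        = (if n = 0 then a n else 0) + (if n = m then b n else 0) := by
    intro n _
    split_ifs with h1 h2
    · omega
    · simp
    · simp
    · simp
  rw [Finset.sum_congr rfl h, Finset.sum_add_distrib, Finset.sum_ite_eq' (Finset.range (m + 1)) 0 a,
    Finset.sum_ite_eq' (Finset.range (m + 1)) m b, if_pos (Finset.mem_range.mpr (by omega)),
    if_pos (Finset.mem_range.mpr (by omega))]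

lemma sum_sq_mu_le (φ : ℂ → ℂ) (l : ℕ → ℂ)
    (htaylor : ∀ z : ℂ, ‖z‖ < 1 → HasSum (fun n : ℕ => l n * z ^ n) (φ z))
    (hbound : ∀ z : ℂ, ‖z‖ < 1 → ‖φ z‖ ≤ 1)
    (hl1 : ∀ n, ‖l n‖ ≤ 1) (hsum : Summable fun n : ℕ => ‖l n‖ ^ 2)
    (m : ℕ) (hm : 0 < m) (c : ℂ) :
    ∑' n : ℕ, ‖l n + c * (if m ≤ n then l (n - m) else 0)‖ ^ 2 ≤ 1 + ‖c‖ ^ 2 := by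
  set μ : ℕ → ℂ := fun n => l n + c * (if m ≤ n then l (n - m) else 0) with hμdef
  have hshift : Summable (fun n : ℕ => ‖(if m ≤ n then l (n - m) else 0 : ℂ)‖ ^ 2) := by
    refine (summable_nat_add_iff m).mp ?_
    simpa using hsum
  have hμsum : Summable (fun n : ℕ => ‖μ n‖ ^ 2) := by
    refine Summable.of_nonneg_of_le (fun n => sq_nonneg _) (fun n => ?_)
      ((hsum.mul_left 2).add ((hshift.mul_left (2 * ‖c‖ ^ 2))))
    have h1 : ‖μ n‖ ≤ ‖l n‖ + ‖c‖ * ‖(if m ≤ n then l (n - m) else 0 : ℂ)‖ := by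
      refine (norm_add_le _ _).trans ?_
      rw [norm_mul]
    have h2 : (0:ℝ) ≤ ‖l n‖ := norm_nonneg _
    have h3 : (0:ℝ) ≤ ‖c‖ * ‖(if m ≤ n then l (n - m) else 0 : ℂ)‖ :=
      mul_nonneg (norm_nonneg _) (norm_nonneg _)
    have h4 : (0:ℝ) ≤ ‖μ n‖ := norm_nonneg _
    nlinarith [sq_nonneg (‖l n‖ - ‖c‖ * ‖(if m ≤ n then l (n - m) else 0 : ℂ)‖)]
  -- Step 1 : finite-sum bound at radius r < 1
  have step1 : ∀ r : ℝ, 0 ≤ r → r < 1 → ∀ L : ℕ,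
      ∑ n ∈ Finset.range L, ‖μ n‖ ^ 2 * r ^ (2 * n) ≤
        1 + ‖c‖ ^ 2 + (2 * (1 + ‖c‖) * ((1 + ‖c‖) * r ^ L / (1 - r)) +
          ((1 + ‖c‖) * r ^ L / (1 - r)) ^ 2) := by
    intro r hr0 hr1 L
    set τ : ℝ := (1 + ‖c‖) * r ^ L / (1 - r) with hτdef
    have hτ0 : 0 ≤ τ := by
      apply div_nonneg
      · positivity
      · linarith
    set M : ℕ := max L (m + 1) with hMdef
    have hM0 : 0 < M := lt_of_lt_of_le (Nat.succ_pos m) (le_max_right _ _)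
    have hLM : L ≤ M := le_max_left _ _
    have hmM : m + 1 ≤ M := le_max_right _ _
    set W : ℂ := Complex.exp (2 * Real.pi * Complex.I / M) with hWdef
    have hW1 : ‖W‖ = 1 := by
      have : 2 * Real.pi * Complex.I / (M : ℂ) = ((2 * Real.pi / M : ℝ) : ℂ) * Complex.I := by
        push_cast
        ring
      rw [hWdef, this]
      exact Complex.norm_exp_ofReal_mul_I _
    have hzk : ∀ k : ℕ, ‖(r : ℂ) * W ^ k‖ = r := by
      intro k
      rw [norm_mul, norm_pow, hW1, one_pow, mul_one, Complex.norm_real,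
        Real.norm_of_nonneg hr0]
    have hzklt : ∀ k : ℕ, ‖(r : ℂ) * W ^ k‖ < 1 := fun k => by rw [hzk]; exact hr1
    have hpar := discrete_parseval M L hLM hM0 μ r
    -- pointwise bound on each evaluation
    have hPk : ∀ k : ℕ,
        ‖∑ n ∈ Finset.range L, μ n * ((r : ℂ) * W ^ k) ^ n‖ ^ 2 ≤
          ‖1 + c * ((r : ℂ) * W ^ k) ^ m‖ ^ 2 + (2 * (1 + ‖c‖) * τ + τ ^ 2) := by
      intro k
      set z : ℂ := (r : ℂ) * W ^ k with hzdef
      have hz1 : ‖z‖ < 1 := hzklt k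
      have hA0 : (0:ℝ) ≤ ‖1 + c * z ^ m‖ := norm_nonneg _
      have hA1 : ‖1 + c * z ^ m‖ ≤ 1 + ‖c‖ := by
        refine (norm_add_le _ _).trans ?_
        rw [norm_one, norm_mul, norm_pow]
        have : ‖z‖ ^ m ≤ 1 := pow_le_one₀ (norm_nonneg z) hz1.le
        nlinarith [norm_nonneg c]
      have htb : ‖(1 + c * z ^ m) * φ z - ∑ n ∈ Finset.range L, μ n * z ^ n‖ ≤ τ := by
        have := tail_bound φ l htaylor hl1 m c hz1 L
        rwa [hzk k] at this
      have hψb : ‖(1 + c * z ^ m) * φ z‖ ≤ ‖1 + c * z ^ m‖ := by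
        rw [norm_mul]
        exact mul_le_of_le_one_right hA0 (hbound z hz1)
      have hP : ‖∑ n ∈ Finset.range L, μ n * z ^ n‖ ≤ ‖1 + c * z ^ m‖ + τ := by
        calc ‖∑ n ∈ Finset.range L, μ n * z ^ n‖
            ≤ ‖(1 + c * z ^ m) * φ z‖ +
              ‖(1 + c * z ^ m) * φ z - ∑ n ∈ Finset.range L, μ n * z ^ n‖ := by
              have := norm_sub_le ((1 + c * z ^ m) * φ z)
                ((1 + c * z ^ m) * φ z - ∑ n ∈ Finset.range L, μ n * z ^ n)
              have heq : (1 + c * z ^ m) * φ z -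
                  ((1 + c * z ^ m) * φ z - ∑ n ∈ Finset.range L, μ n * z ^ n)
                  = ∑ n ∈ Finset.range L, μ n * z ^ n := by ring
              rw [heq] at this
              linarith
          _ ≤ ‖1 + c * z ^ m‖ + τ := by linarith
      nlinarith [norm_nonneg (∑ n ∈ Finset.range L, μ n * z ^ n)]
    -- exact value of the comparison sum
    have hpar2 : ∑ k ∈ Finset.range M, ‖1 + c * ((r : ℂ) * W ^ k) ^ m‖ ^ 2
        = M * (1 + ‖c‖ ^ 2 * r ^ (2 * m)) := by
      have hpoly : ∀ k : ℕ, ∑ n ∈ Finset.range (m + 1),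
          (if n = 0 then (1:ℂ) else if n = m then c else 0) * ((r : ℂ) * W ^ k) ^ n
          = 1 + c * ((r : ℂ) * W ^ k) ^ m := by
        intro k
        have h : ∀ n ∈ Finset.range (m + 1),
            (if n = 0 then (1:ℂ) else if n = m then c else 0) * ((r : ℂ) * W ^ k) ^ n
              = (if n = 0 then (fun n : ℕ => ((r : ℂ) * W ^ k) ^ n) n
                  else if n = m then (fun n : ℕ => c * ((r : ℂ) * W ^ k) ^ n) n else 0) := by
          intro n _
          split_ifs <;> simp
        rw [Finset.sum_congr rfl h, sum_two m hm]
        simp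
      have hcoef : ∑ n ∈ Finset.range (m + 1),
          ‖(if n = 0 then (1:ℂ) else if n = m then c else 0)‖ ^ 2 * r ^ (2 * n)
          = 1 + ‖c‖ ^ 2 * r ^ (2 * m) := by
        have h : ∀ n ∈ Finset.range (m + 1),
            ‖(if n = 0 then (1:ℂ) else if n = m then c else 0)‖ ^ 2 * r ^ (2 * n)
              = (if n = 0 then (fun n : ℕ => ‖(1:ℂ)‖ ^ 2 * r ^ (2 * n)) n
                  else if n = m then (fun n : ℕ => ‖c‖ ^ 2 * r ^ (2 * n)) n else 0) := by
          intro n _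
          split_ifs <;> simp
        rw [Finset.sum_congr rfl h, sum_two m hm]
        simp
      calc ∑ k ∈ Finset.range M, ‖1 + c * ((r : ℂ) * W ^ k) ^ m‖ ^ 2
          = ∑ k ∈ Finset.range M, ‖∑ n ∈ Finset.range (m + 1),
              (if n = 0 then (1:ℂ) else if n = m then c else 0) * ((r : ℂ) * W ^ k) ^ n‖ ^ 2 := by
            refine Finset.sum_congr rfl fun k _ => ?_
            rw [hpoly k]
        _ = M * (1 + ‖c‖ ^ 2 * r ^ (2 * m)) := by
            rw [discrete_parseval M (m + 1) hmM hM0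
              (fun n => if n = 0 then 1 else if n = m then c else 0) r, hcoef]
    -- combine
    have hsum_le : (M : ℝ) * ∑ n ∈ Finset.range L, ‖μ n‖ ^ 2 * r ^ (2 * n)
        ≤ (M : ℝ) * (1 + ‖c‖ ^ 2 * r ^ (2 * m)) + (M : ℝ) * (2 * (1 + ‖c‖) * τ + τ ^ 2) := by
      rw [← hpar, ← hpar2]
      calc ∑ k ∈ Finset.range M,
            ‖∑ n ∈ Finset.range L, μ n * ((r : ℂ) * W ^ k) ^ n‖ ^ 2
          ≤ ∑ k ∈ Finset.range M,
            (‖1 + c * ((r : ℂ) * W ^ k) ^ m‖ ^ 2 + (2 * (1 + ‖c‖) * τ + τ ^ 2)) :=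
            Finset.sum_le_sum fun k _ => hPk k
        _ = ∑ k ∈ Finset.range M, ‖1 + c * ((r : ℂ) * W ^ k) ^ m‖ ^ 2
            + (M : ℝ) * (2 * (1 + ‖c‖) * τ + τ ^ 2) := by
            rw [Finset.sum_add_distrib, Finset.sum_const, Finset.card_range, nsmul_eq_mul]
    have hMpos : (0:ℝ) < M := by exact_mod_cast hM0
    have hr2m : ‖c‖ ^ 2 * r ^ (2 * m) ≤ ‖c‖ ^ 2 := by
      have : r ^ (2 * m) ≤ 1 := pow_le_one₀ hr0 hr1.le
      nlinarith [sq_nonneg ‖c‖]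
    have := (mul_le_mul_iff_right₀ hMpos).mp (by linarith [hsum_le] :
      (M : ℝ) * ∑ n ∈ Finset.range L, ‖μ n‖ ^ 2 * r ^ (2 * n)
        ≤ (M : ℝ) * ((1 + ‖c‖ ^ 2 * r ^ (2 * m)) + (2 * (1 + ‖c‖) * τ + τ ^ 2)))
    linarith
  -- Step 2 : tsum bound at radius r < 1
  have step2 : ∀ r : ℝ, 0 ≤ r → r < 1 →
      ∑' n : ℕ, ‖μ n‖ ^ 2 * r ^ (2 * n) ≤ 1 + ‖c‖ ^ 2 := by
    intro r hr0 hr1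
    have hsummul : Summable (fun n : ℕ => ‖μ n‖ ^ 2 * r ^ (2 * n)) := by
      refine Summable.of_nonneg_of_le (fun n => by positivity) (fun n => ?_) hμsum
      have h1 : r ^ (2 * n) ≤ 1 := pow_le_one₀ hr0 hr1.le
      nlinarith [sq_nonneg ‖μ n‖]
    have htend1 := hsummul.hasSum.tendsto_sum_nat
    have hτtend : Filter.Tendsto (fun L : ℕ => (1 + ‖c‖) * r ^ L / (1 - r)) Filter.atTop
        (nhds 0) := by
      have heq : (fun L : ℕ => (1 + ‖c‖) * r ^ L / (1 - r))
          = (fun L : ℕ => ((1 + ‖c‖) / (1 - r)) * r ^ L) := by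
        funext L
        ring
      rw [heq]
      have := tendsto_pow_atTop_nhds_zero_of_lt_one hr0 hr1
      simpa using this.const_mul ((1 + ‖c‖) / (1 - r))
    have htend2 : Filter.Tendsto (fun L : ℕ => 1 + ‖c‖ ^ 2 +
        (2 * (1 + ‖c‖) * ((1 + ‖c‖) * r ^ L / (1 - r)) +
          ((1 + ‖c‖) * r ^ L / (1 - r)) ^ 2)) Filter.atTop (nhds (1 + ‖c‖ ^ 2)) := by
      have h := ((hτtend.const_mul (2 * (1 + ‖c‖))).add (hτtend.pow 2))
      have := (tendsto_const_nhds (x := 1 + ‖c‖ ^ 2) (f := Filter.atTop (α := ℕ))).add h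
      simpa using this
    exact le_of_tendsto_of_tendsto' htend1 htend2 (fun L => step1 r hr0 hr1 L)
  -- Step 3 : finite sums bounded
  have step3 : ∀ L : ℕ, ∑ n ∈ Finset.range L, ‖μ n‖ ^ 2 ≤ 1 + ‖c‖ ^ 2 := by
    intro L
    set rj : ℕ → ℝ := fun j => 1 - 1 / (j + 1) with hrj
    have hrj0 : ∀ j, 0 ≤ rj j := by
      intro j
      have h1 : 1 / ((j:ℝ) + 1) ≤ 1 := by
        rw [div_le_one (by positivity)]
        linarith [Nat.cast_nonneg (α := ℝ) j]
      simp only [hrj]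
      linarith
    have hrj1 : ∀ j, rj j < 1 := by
      intro j
      have : 0 < 1 / ((j:ℝ) + 1) := by positivity
      simp only [hrj]
      linarith
    have hrjtend : Filter.Tendsto rj Filter.atTop (nhds 1) := by
      have := tendsto_one_div_add_atTop_nhds_zero_nat (𝕜 := ℝ)
      have h2 := (tendsto_const_nhds (x := (1:ℝ)) (f := Filter.atTop (α := ℕ))).sub this
      simpa [hrj] using h2
    have htendL : Filter.Tendsto (fun j => ∑ n ∈ Finset.range L, ‖μ n‖ ^ 2 * rj j ^ (2 * n))
        Filter.atTop (nhds (∑ n ∈ Finset.range L, ‖μ n‖ ^ 2)) := by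
      have : ∀ n ∈ Finset.range L, Filter.Tendsto (fun j => ‖μ n‖ ^ 2 * rj j ^ (2 * n))
          Filter.atTop (nhds (‖μ n‖ ^ 2)) := by
        intro n _
        have := (hrjtend.pow (2 * n)).const_mul (‖μ n‖ ^ 2)
        simpa using this
      exact tendsto_finset_sum _ this
    refine le_of_tendsto htendL (Filter.Eventually.of_forall fun j => ?_)
    have hsummul : Summable (fun n : ℕ => ‖μ n‖ ^ 2 * rj j ^ (2 * n)) := by
      refine Summable.of_nonneg_of_le
        (fun n => mul_nonneg (sq_nonneg _) (pow_nonneg (hrj0 j) _)) (fun n => ?_) hμsum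
      have h1 : rj j ^ (2 * n) ≤ 1 := pow_le_one₀ (hrj0 j) (hrj1 j).le
      nlinarith [sq_nonneg ‖μ n‖]
    calc ∑ n ∈ Finset.range L, ‖μ n‖ ^ 2 * rj j ^ (2 * n)
        ≤ ∑' n : ℕ, ‖μ n‖ ^ 2 * rj j ^ (2 * n) :=
          Summable.sum_le_tsum _ (fun n _ => mul_nonneg (sq_nonneg _) (pow_nonneg (hrj0 j) _)) hsummul
      _ ≤ 1 + ‖c‖ ^ 2 := step2 (rj j) (hrj0 j) (hrj1 j)
  exact Real.tsum_le_of_sum_range_le (fun n => sq_nonneg _) step3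

lemma sq_norm_eq_normSq (z : ℂ) : ‖z‖ ^ 2 = Complex.normSq z := by
  rw [Complex.normSq_eq_norm_sq]

lemma dcoef_zero (φ : ℂ → ℂ) (l : ℕ → ℂ)
    (htaylor : ∀ z : ℂ, ‖z‖ < 1 → HasSum (fun n : ℕ => l n * z ^ n) (φ z))
    (hbound : ∀ z : ℂ, ‖z‖ < 1 → ‖φ z‖ ≤ 1)
    (hl1 : ∀ n, ‖l n‖ ≤ 1) (hsum : Summable fun n : ℕ => ‖l n‖ ^ 2)
    (hnorm : ∑' n : ℕ, ‖l n‖ ^ 2 = 1) (m : ℕ) (hm : 0 < m) :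
    ∑' n : ℕ, l (n + m) * (starRingEnd ℂ) (l n) = 0 := by
  set g : ℕ → ℂ := fun n => if m ≤ n then l (n - m) else 0 with hgdef
  have hgm : ∀ n : ℕ, g (n + m) = l n := by
    intro n
    simp [hgdef]
  have hgsum : Summable (fun n : ℕ => ‖g n‖ ^ 2) := by
    refine (summable_nat_add_iff m).mp ?_
    simp only [hgm]
    exact hsum
  have hgnorm : ∑' n : ℕ, ‖g n‖ ^ 2 = 1 := by
    have h1 : HasSum (fun n : ℕ => ‖g (n + m)‖ ^ 2) 1 := by
      simp only [hgm]
      exact hnorm ▸ hsum.hasSum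
    have h2 := (hasSum_nat_add_iff (f := fun n => ‖g n‖ ^ 2) m).mp h1
    have h3 : ∑ i ∈ Finset.range m, ‖g i‖ ^ 2 = 0 := by
      refine Finset.sum_eq_zero fun i hi => ?_
      rw [hgdef]
      simp [if_neg (Finset.mem_range.mp hi).not_ge]
    rw [h3, add_zero] at h2
    exact h2.tsum_eq
  have hcross : Summable (fun n : ℕ => l n * (starRingEnd ℂ) (g n)) := by
    refine Summable.of_norm ?_
    refine Summable.of_nonneg_of_le (fun n => norm_nonneg _) (fun n => ?_)
      (((hsum.add hgsum).mul_left (1/2 : ℝ)))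
    rw [norm_mul, RCLike.norm_conj]
    nlinarith [sq_nonneg (‖l n‖ - ‖g n‖), norm_nonneg (l n), norm_nonneg (g n)]
  set D : ℂ := ∑' n : ℕ, l n * (starRingEnd ℂ) (g n) with hDdef
  have key : ∀ c : ℂ, ((starRingEnd ℂ) c * D).re ≤ 0 := by
    intro c
    have hexp : ∀ n : ℕ, ‖l n + c * g n‖ ^ 2 =
        ‖l n‖ ^ 2 + ‖c‖ ^ 2 * ‖g n‖ ^ 2 +
          2 * ((starRingEnd ℂ) c * (l n * (starRingEnd ℂ) (g n))).re := by
      intro n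
      rw [sq_norm_eq_normSq, sq_norm_eq_normSq, sq_norm_eq_normSq, sq_norm_eq_normSq]
      simp only [Complex.normSq_apply, Complex.add_re, Complex.add_im, Complex.mul_re,
        Complex.mul_im, Complex.conj_re, Complex.conj_im]
      ring
    have hs1 : Summable (fun n : ℕ => ‖c‖ ^ 2 * ‖g n‖ ^ 2) := hgsum.mul_left _
    have hs2 : Summable (fun n : ℕ =>
        2 * ((starRingEnd ℂ) c * (l n * (starRingEnd ℂ) (g n))).re) := by
      have := Complex.hasSum_re ((hcross.mul_left ((starRingEnd ℂ) c)).hasSum)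
      exact this.summable.mul_left 2
    have hT := sum_sq_mu_le φ l htaylor hbound hl1 hsum m hm c
    have hTeq : ∑' n : ℕ, ‖l n + c * g n‖ ^ 2 =
        1 + ‖c‖ ^ 2 + 2 * ((starRingEnd ℂ) c * D).re := by
      calc ∑' n : ℕ, ‖l n + c * g n‖ ^ 2
          = ∑' n : ℕ, (‖l n‖ ^ 2 + ‖c‖ ^ 2 * ‖g n‖ ^ 2 +
              2 * ((starRingEnd ℂ) c * (l n * (starRingEnd ℂ) (g n))).re) := by
            exact tsum_congr hexp
        _ = (∑' n : ℕ, (‖l n‖ ^ 2 + ‖c‖ ^ 2 * ‖g n‖ ^ 2)) +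
            ∑' n : ℕ, 2 * ((starRingEnd ℂ) c * (l n * (starRingEnd ℂ) (g n))).re :=
            Summable.tsum_add (hsum.add hs1) hs2
        _ = ((∑' n : ℕ, ‖l n‖ ^ 2) + ∑' n : ℕ, ‖c‖ ^ 2 * ‖g n‖ ^ 2) +
            ∑' n : ℕ, 2 * ((starRingEnd ℂ) c * (l n * (starRingEnd ℂ) (g n))).re := by
            rw [Summable.tsum_add hsum hs1]
        _ = 1 + ‖c‖ ^ 2 + 2 * ((starRingEnd ℂ) c * D).re := by
            rw [hnorm, tsum_mul_left, hgnorm, mul_one]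
            congr 1
            rw [tsum_mul_left]
            congr 1
            rw [← Complex.re_tsum (hcross.mul_left ((starRingEnd ℂ) c)), tsum_mul_left]

    rw [hTeq] at hT
    linarith
  have hD0 : D = 0 := by
    have h := key D
    rw [mul_comm, Complex.mul_conj, Complex.ofReal_re] at h
    exact Complex.normSq_eq_zero.mp (le_antisymm h (Complex.normSq_nonneg D))
  -- now relate the target to D
  have hshift : HasSum (fun n : ℕ => l (n + m) * (starRingEnd ℂ) (g (n + m))) D := by
    have h1 : ∑ i ∈ Finset.range m, l i * (starRingEnd ℂ) (g i) = 0 := by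
      refine Finset.sum_eq_zero fun i hi => ?_
      rw [hgdef]
      simp [if_neg (Finset.mem_range.mp hi).not_ge]
    have := (hasSum_nat_add_iff' (f := fun n => l n * (starRingEnd ℂ) (g n)) m).mpr
      hcross.hasSum
    rw [h1, sub_zero] at this
    exact this
  have : ∑' n : ℕ, l (n + m) * (starRingEnd ℂ) (l n) = D := by
    rw [← hshift.tsum_eq]
    exact tsum_congr fun n => by rw [hgm]
  rw [this, hD0]

noncomputable def lpEval (n : ℕ) : lp (fun _ : ℕ => ℂ) 2 →L[ℂ] ℂ :=
  LinearMap.mkContinuous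
    { toFun := fun x => x n
      map_add' := fun x y => by simp
      map_smul' := fun c x => by simp }
    1 (fun x => by rw [one_mul]; exact lp.norm_apply_le_norm (by norm_num) x n)

lemma lpEval_apply (n : ℕ) (x : lp (fun _ : ℕ => ℂ) 2) : lpEval n x = x n := rfl

/-- Condition (c): for every square-summable complex sequence `a`, the
Cauchy product of `a` with `l` has the same `ℓ²` sum as `a`. -/
def ConditionC (l : ℕ → ℂ) : Prop :=
  ∀ a : ℕ → ℂ, Summable (fun n => ‖a n‖ ^ 2) →
    ∑' n : ℕ, ‖∑ j ∈ Finset.range (n + 1), a j * l (n - j)‖ ^ 2 = ∑' n : ℕ, ‖a n‖ ^ 2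

/-- If `φ` is analytic on the open unit disk with Taylor coefficients `(λ_n)` at `0`,
`|φ(z)| ≤ 1` on the disk, and `∑_n |λ_n|² = 1`, then `(λ_n)` satisfies condition (c). -/
theorem bounded_with_norm_one_implies_conditionC (φ : ℂ → ℂ) (l : ℕ → ℂ)
    (hanalytic : AnalyticOnNhd ℂ φ (Metric.ball (0 : ℂ) 1))
    (htaylor : ∀ z : ℂ, ‖z‖ < 1 → HasSum (fun n : ℕ => l n * z ^ n) (φ z))
    (hbound : ∀ z : ℂ, ‖z‖ < 1 → ‖φ z‖ ≤ 1)
    (hnorm : ∑' n : ℕ, ‖l n‖ ^ 2 = 1) :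
    ConditionC l := by
  classical
  have hsum : Summable (fun n : ℕ => ‖l n‖ ^ 2) := by
    by_contra h
    rw [tsum_eq_zero_of_not_summable h] at hnorm
    norm_num at hnorm
  have hl1 : ∀ n, ‖l n‖ ≤ 1 := by
    intro n
    have h := Summable.le_tsum hsum n (fun i _ => sq_nonneg _)
    rw [hnorm] at h
    nlinarith [norm_nonneg (l n)]
  intro a ha
  set F : ℕ → ℕ → ℂ := fun j n => if j ≤ n then l (n - j) else 0 with hFdef
  have hFsum : ∀ j, Summable (fun n => ‖F j n‖ ^ 2) := by
    intro j
    refine (summable_nat_add_iff j).mp ?_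
    simpa [hFdef] using hsum
  have hFmem : ∀ j, Memℓp (F j) 2 := by
    intro j
    apply memℓp_gen
    have : (2 : ℝ≥0∞).toReal = ((2 : ℕ) : ℝ) := by norm_num
    rw [this]
    simp_rw [Real.rpow_natCast]
    exact_mod_cast hFsum j
  set f : ℕ → lp (fun _ : ℕ => ℂ) 2 := fun j => ⟨F j, hFmem j⟩ with hfdef
  have hfapp : ∀ j n, (f j : ℕ → ℂ) n = F j n := fun j n => rfl
  -- orthonormality
  have hinner : ∀ i j : ℕ, i ≤ j → ⟪f i, f j⟫ = if i = j then 1 else 0 := by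
    intro i j hij
    have h0 : HasSum (fun n => (starRingEnd ℂ) ((f i : ℕ → ℂ) n) * (f j : ℕ → ℂ) n)
        ⟪f i, f j⟫ := by
      have := lp.hasSum_inner (𝕜 := ℂ) (f i) (f j)
      simpa [RCLike.inner_apply, mul_comm] using this
    have hzero : ∑ n ∈ Finset.range j,
        (starRingEnd ℂ) ((f i : ℕ → ℂ) n) * (f j : ℕ → ℂ) n = 0 := by
      refine Finset.sum_eq_zero fun n hn => ?_
      have : (f j : ℕ → ℂ) n = 0 := by
        rw [hfapp, hFdef]
        simp [if_neg (Finset.mem_range.mp hn).not_ge]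
      rw [this, mul_zero]
    have h1 : HasSum (fun n => (starRingEnd ℂ) ((f i : ℕ → ℂ) (n + j)) * (f j : ℕ → ℂ) (n + j))
        ⟪f i, f j⟫ := by
      have := (hasSum_nat_add_iff' (f := fun n =>
        (starRingEnd ℂ) ((f i : ℕ → ℂ) n) * (f j : ℕ → ℂ) n) j).mpr h0
      rwa [hzero, sub_zero] at this
    have h2 : ∀ n : ℕ, (starRingEnd ℂ) ((f i : ℕ → ℂ) (n + j)) * (f j : ℕ → ℂ) (n + j)
        = (starRingEnd ℂ) (l (n + (j - i))) * l n := by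
      intro n
      rw [hfapp, hfapp, hFdef]
      simp only [if_pos (Nat.le_add_left j n), if_pos (hij.trans (Nat.le_add_left j n))]
      congr 3 <;> omega
    rw [funext h2] at h1
    by_cases hij' : i = j
    · subst hij'
      rw [if_pos rfl]
      refine h1.unique ?_
      simp only [Nat.sub_self, add_zero]
      have : ∀ n : ℕ, (starRingEnd ℂ) (l n) * l n = ((‖l n‖ ^ 2 : ℝ) : ℂ) := by
        intro n
        rw [norm_sq_cast]
        ring
      rw [funext this]
      have := (Complex.ofRealCLM : ℝ →L[ℝ] ℂ).hasSum (hnorm ▸ hsum.hasSum)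
      simpa using this
    · rw [if_neg hij']
      have hm : 0 < j - i := by omega
      have hd := dcoef_zero φ l htaylor hbound hl1 hsum hnorm (j - i) hm
      have hstar : ∀ n : ℕ, (starRingEnd ℂ) (l (n + (j - i))) * l n
          = star (l (n + (j - i)) * (starRingEnd ℂ) (l n)) := by
        intro n
        simp [mul_comm]
      rw [funext hstar] at h1
      rw [h1.tsum_eq.symm, ← tsum_star, hd, star_zero]
  have horth : Orthonormal ℂ f := by
    rw [orthonormal_iff_ite]
    intro i j
    rcases le_total i j with hij | hij
    · exact hinner i j hij
    · have := hinner j i hij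
      have h2 := congrArg (starRingEnd ℂ) this
      rw [inner_conj_symm] at h2
      rw [h2]
      by_cases h : i = j
      · simp [h]
      · rw [if_neg (fun hh => h hh.symm), if_neg h, map_zero]
  -- summability of the series ∑ a j • f j
  have hpyth : ∀ t : Finset ℕ, ‖∑ j ∈ t, a j • f j‖ ^ 2 = ∑ j ∈ t, ‖a j‖ ^ 2 := by
    intro t
    have := horth.inner_sum a a t
    have hre : ‖∑ j ∈ t, a j • f j‖ ^ 2 = (⟪∑ j ∈ t, a j • f j, ∑ j ∈ t, a j • f j⟫).re := by
      rw [@norm_sq_eq_re_inner ℂ]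
      rfl
    rw [hre, this]
    rw [Complex.re_sum]
    refine Finset.sum_congr rfl fun j _ => ?_
    rw [mul_comm, ← norm_sq_cast (a j), Complex.ofReal_re]
  have hsummable : Summable (fun j => a j • f j) := by
    rw [summable_iff_cauchySeq_finset]
    rw [cauchySeq_finset_iff_vanishing_norm]
    intro ε hε
    obtain ⟨s, hs⟩ := summable_iff_vanishing_norm.mp ha (ε ^ 2) (by positivity)
    refine ⟨s, fun t ht => ?_⟩
    have h1 := hs t ht
    have h2 : ∑ j ∈ t, ‖a j‖ ^ 2 < ε ^ 2 := by
      have : |∑ j ∈ t, ‖a j‖ ^ 2| < ε ^ 2 := by simpa using h1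
      exact lt_of_le_of_lt (le_abs_self _) this
    have h3 : ‖∑ j ∈ t, a j • f j‖ ^ 2 < ε ^ 2 := by rw [hpyth t]; exact h2
    exact lt_of_pow_lt_pow_left₀ 2 hε.le h3
  set b : lp (fun _ : ℕ => ℂ) 2 := ∑' j, a j • f j with hbdef
  have hbsum : HasSum (fun j => a j • f j) b := hsummable.hasSum
  -- coordinates of b
  have hcoord : ∀ n : ℕ, (b : ℕ → ℂ) n = ∑ j ∈ Finset.range (n + 1), a j * l (n - j) := by
    intro n
    have h1 : HasSum (fun j => lpEval n (a j • f j)) (lpEval n b) := (lpEval n).hasSum hbsum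
    have h2 : ∀ j, lpEval n (a j • f j) = a j * F j n := by
      intro j
      rw [lpEval_apply]
      rw [lp.coeFn_smul]
      simp [hfapp]
    rw [funext h2] at h1
    have h3 : ∀ j ∉ Finset.range (n + 1), a j * F j n = 0 := by
      intro j hj
      have : ¬ j ≤ n := by simpa [Nat.lt_succ_iff] using hj
      rw [hFdef]
      simp [if_neg this]
    have h4 := h1.tsum_eq.symm.trans (tsum_eq_sum h3)
    rw [lpEval_apply] at h4
    rw [h4]
    refine Finset.sum_congr rfl fun j hj => ?_
    have : j ≤ n := Nat.lt_succ_iff.mp (Finset.mem_range.mp hj)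
    rw [hFdef]
    simp [if_pos this]
  -- coefficients recovered : ⟪f i, b⟫ = a i
  have hcoeff : ∀ i : ℕ, ⟪f i, b⟫ = a i := by
    intro i
    have h1 : HasSum (fun j => ⟪f i, a j • f j⟫) ⟪f i, b⟫ :=
      (innerSL ℂ (f i)).hasSum hbsum
    have h2 : ∀ j, ⟪f i, a j • f j⟫ = if j = i then a i else 0 := by
      intro j
      rw [inner_smul_right]
      rw [orthonormal_iff_ite.mp horth i j]
      by_cases h : i = j
      · subst h
        simp
      · rw [if_neg h, if_neg (fun hh => h hh.symm), mul_zero]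
    rw [funext h2] at h1
    exact h1.unique (hasSum_ite_eq i (a i))
  -- norm of b
  have hnormb : ‖b‖ ^ 2 = ∑' j, ‖a j‖ ^ 2 := by
    have h1 : HasSum (fun j => ⟪b, a j • f j⟫) ⟪b, b⟫ := (innerSL ℂ b).hasSum hbsum
    have h2 : ∀ j, ⟪b, a j • f j⟫ = ((‖a j‖ ^ 2 : ℝ) : ℂ) := by
      intro j
      rw [inner_smul_right, ← inner_conj_symm, hcoeff j, norm_sq_cast]
    rw [funext h2] at h1
    have h3 := (Complex.ofRealCLM : ℝ →L[ℝ] ℂ).hasSum ha.hasSum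
    have h4 : ⟪b, b⟫ = ((∑' j, ‖a j‖ ^ 2 : ℝ) : ℂ) := h1.unique (by simpa using h3)
    have h5 : ‖b‖ ^ 2 = (⟪b, b⟫).re := by
      rw [@norm_sq_eq_re_inner ℂ]
      rfl
    rw [h5, h4, Complex.ofReal_re]
  -- conclude
  have h6 : ∑' n : ℕ, ‖∑ j ∈ Finset.range (n + 1), a j * l (n - j)‖ ^ 2
      = ∑' n : ℕ, ‖(b : ℕ → ℂ) n‖ ^ 2 := by
    refine tsum_congr fun n => ?_
    rw [hcoord n]
  rw [h6, ← hnormb]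
  have h7 := lp.norm_rpow_eq_tsum (p := 2) (by norm_num) b
  have h8 : (2 : ℝ≥0∞).toReal = ((2 : ℕ) : ℝ) := by norm_num
  rw [h8] at h7
  simp_rw [Real.rpow_natCast] at h7
  exact_mod_cast h7.symm
end

section
/- Let (λ_n)_{n≥0} be a sequence of complex numbers satisfying condition (c): for every square-summable complex sequence (a_n)_{n≥0}, ∑_{n=0}^∞ |∑_{j=0}^n a_j λ_{n-j}|² = ∑_{n=0}^∞ |a_n|². Then ∑_{n=0}^∞ |λ_n|² = 1, the power series φ(z) = ∑_{n=0}^∞ λ_n z^n converges on the open unit disk 𝔻 = {z ∈ ℂ : |z| < 1}, and |φ(z)| ≤ 1 for all z ∈ 𝔻. -/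
/-- Cauchy–Schwarz for infinite sums. -/
lemma tsum_cs {f g : ℕ → ℝ} (hf0 : ∀ n, 0 ≤ f n) (hg0 : ∀ n, 0 ≤ g n)
    (hf : Summable (fun n => f n ^ 2)) (hg : Summable (fun n => g n ^ 2)) :
    ∑' n, f n * g n ≤ Real.sqrt (∑' n, f n ^ 2) * Real.sqrt (∑' n, g n ^ 2) := by
  have hA : 0 ≤ ∑' n, f n ^ 2 := tsum_nonneg fun n => sq_nonneg _
  have hB : 0 ≤ ∑' n, g n ^ 2 := tsum_nonneg fun n => sq_nonneg _
  have hsum : Summable (fun n => f n * g n) := by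
    apply Summable.of_nonneg_of_le (fun n => mul_nonneg (hf0 n) (hg0 n))
      (fun n => ?_) ((hf.add hg).div_const 2)
    nlinarith [sq_nonneg (f n - g n)]
  refine Summable.tsum_le_of_sum_le hsum fun s => ?_
  rw [← Real.sqrt_mul hA]
  rw [Real.le_sqrt (Finset.sum_nonneg fun n _ => mul_nonneg (hf0 n) (hg0 n))]
  calc (∑ i ∈ s, f i * g i) ^ 2 ≤ (∑ i ∈ s, f i ^ 2) * ∑ i ∈ s, g i ^ 2 :=
        Finset.sum_mul_sq_le_sq_mul_sq s f g
    _ ≤ (∑' n, f n ^ 2) * ∑' n, g n ^ 2 := by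
        apply mul_le_mul (Summable.sum_le_tsum s (fun n _ => sq_nonneg _) hf)
          (Summable.sum_le_tsum s (fun n _ => sq_nonneg _) hg)
          (Finset.sum_nonneg fun n _ => sq_nonneg _) hA
  exact mul_nonneg hA hB

/-- If `(λ_n)` satisfies condition (c), then `∑_n |λ_n|² = 1`, the power series
`∑ λ_n z^n` converges on the open unit disk, and its sum is bounded by one there. -/
theorem conditionC_implies_norm_one_and_bounded (l : ℕ → ℂ) (hc : ConditionC l) :
    (∑' n : ℕ, ‖l n‖ ^ 2 = 1) ∧
      ∀ z : ℂ, ‖z‖ < 1 →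
        Summable (fun n : ℕ => l n * z ^ n) ∧ ‖∑' n : ℕ, l n * z ^ n‖ ≤ 1 := by
  -- Part 1: apply condition (c) to the delta sequence.
  have h1 : ∑' n : ℕ, ‖l n‖ ^ 2 = 1 := by
    set a0 : ℕ → ℂ := fun m => if m = 0 then 1 else 0 with ha0
    have hs : Summable fun n => ‖a0 n‖ ^ 2 := by
      apply summable_of_ne_finset_zero (s := {0})
      intro n hn
      simp only [Finset.mem_singleton] at hn
      simp [ha0, hn]
    have key := hc a0 hs
    have e1 : ∀ n : ℕ, ∑ j ∈ Finset.range (n + 1), a0 j * l (n - j) = l n := by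
      intro n
      rw [Finset.sum_congr rfl (fun j _ => by
        show (if j = 0 then (1:ℂ) else 0) * l (n - j) = if j = 0 then l (n - j) else 0
        split <;> simp)]
      rw [Finset.sum_ite_eq' (Finset.range (n + 1)) 0 (fun j => l (n - j))]
      simp
    have e2 : (fun n => ‖a0 n‖ ^ 2) = fun n : ℕ => if n = 0 then (1:ℝ) else 0 := by
      funext n; by_cases h : n = 0 <;> simp [ha0, h]
    simp only [e1, e2] at key
    rw [key]; exact tsum_ite_eq 0 (fun _ => (1:ℝ))
  refine ⟨h1, fun z hz => ?_⟩
  have hsl : Summable fun n => ‖l n‖ ^ 2 := by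
    by_contra h
    rw [tsum_eq_zero_of_not_summable h] at h1
    norm_num at h1
  have hl1 : ∀ n, ‖l n‖ ≤ 1 := by
    intro n
    have := Summable.le_tsum hsl n fun m _ => sq_nonneg ‖l m‖
    rw [h1] at this
    nlinarith [norm_nonneg (l n)]
  set r : ℝ := ‖z‖ with hrdef
  have hr0 : 0 ≤ r := norm_nonneg z
  have hr2 : r ^ 2 < 1 := by nlinarith
  have hr2' : 0 < 1 - r ^ 2 := by linarith
  -- summability of the power series
  have hφn : Summable fun n : ℕ => ‖l n * z ^ n‖ := by
    apply Summable.of_nonneg_of_le (fun n => norm_nonneg _) (fun n => ?_)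
      (summable_geometric_of_lt_one hr0 hz)
    rw [norm_mul, norm_pow]
    exact mul_le_of_le_one_left (pow_nonneg hr0 n) (hl1 n)
  have hφ : Summable fun n : ℕ => l n * z ^ n := hφn.of_norm
  refine ⟨hφ, ?_⟩
  -- apply condition (c) to a_j = conj(z)^j
  set a : ℕ → ℂ := fun j => (starRingEnd ℂ z) ^ j with ha
  have hna : ∀ n, ‖a n‖ ^ 2 = (r ^ 2) ^ n := by
    intro n
    rw [ha]
    simp only [norm_pow, RCLike.norm_conj]
    rw [← pow_mul, ← pow_mul, Nat.mul_comm]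
  have hgeo : Summable fun n : ℕ => (r ^ 2) ^ n :=
    summable_geometric_of_lt_one (sq_nonneg r) hr2
  have hsa : Summable fun n => ‖a n‖ ^ 2 := by
    simpa only [hna] using hgeo
  have key := hc a hsa
  set b : ℕ → ℂ := fun n => ∑ j ∈ Finset.range (n + 1), a j * l (n - j) with hb
  have hgsum : ∑' n : ℕ, (r ^ 2) ^ n = (1 - r ^ 2)⁻¹ :=
    tsum_geometric_of_lt_one (sq_nonneg r) hr2
  have key2 : ∑' n, ‖b n‖ ^ 2 = (1 - r ^ 2)⁻¹ := by
    have e0 : ∑' n, ‖b n‖ ^ 2 = ∑' n, ‖a n‖ ^ 2 := key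
    rw [e0, show (∑' n, ‖a n‖ ^ 2) = ∑' n : ℕ, (r ^ 2) ^ n from tsum_congr hna, hgsum]
  have hbsum : Summable fun n => ‖b n‖ ^ 2 := by
    by_contra h
    rw [tsum_eq_zero_of_not_summable h] at key2
    have := inv_pos.mpr hr2'
    rw [← key2] at this
    exact lt_irrefl 0 this
  -- Cauchy product identity: (∑ (conj z * z)^j) * φ(z) = ∑ b n * z^n
  have hun : Summable fun j : ℕ => ‖(starRingEnd ℂ z * z) ^ j‖ := by
    have : ∀ j : ℕ, ‖(starRingEnd ℂ z * z) ^ j‖ = (r ^ 2) ^ j := by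
      intro j
      rw [norm_pow, norm_mul, RCLike.norm_conj, ← hrdef, ← sq]
    simpa only [this] using hgeo
  have hcp := tsum_mul_tsum_eq_tsum_sum_range_of_summable_norm hun hφn
  have hterm : ∀ n : ℕ, ∑ k ∈ Finset.range (n + 1),
      (starRingEnd ℂ z * z) ^ k * (l (n - k) * z ^ (n - k)) = b n * z ^ n := by
    intro n
    rw [hb, Finset.sum_mul]
    refine Finset.sum_congr rfl fun k hk => ?_
    have hkn : k ≤ n := Nat.lt_succ_iff.mp (Finset.mem_range.mp hk)
    have : z ^ k * z ^ (n - k) = z ^ n := by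
      rw [← pow_add, Nat.add_sub_cancel' hkn]
    rw [ha, mul_pow]
    calc (starRingEnd ℂ z) ^ k * z ^ k * (l (n - k) * z ^ (n - k))
        = (starRingEnd ℂ z) ^ k * l (n - k) * (z ^ k * z ^ (n - k)) := by ring
      _ = (starRingEnd ℂ z) ^ k * l (n - k) * z ^ n := by rw [this]
  have hmgeo : ‖starRingEnd ℂ z * z‖ < 1 := by
    rw [norm_mul, RCLike.norm_conj, ← hrdef, ← sq]; exact hr2
  have hcsum : ∑' j : ℕ, (starRingEnd ℂ z * z) ^ j = (1 - starRingEnd ℂ z * z)⁻¹ :=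
    tsum_geometric_of_norm_lt_one hmgeo
  have hzz : starRingEnd ℂ z * z = ((r ^ 2 : ℝ) : ℂ) := by
    rw [mul_comm, Complex.mul_conj]
    rw [Complex.normSq_eq_norm_sq, hrdef]
  have hcp2 : ((1 - (r ^ 2 : ℝ) : ℂ))⁻¹ * (∑' n, l n * z ^ n) = ∑' n, b n * z ^ n := by
    rw [← hzz, ← hcsum, hcp]
    exact tsum_congr hterm
  -- norm estimate via Cauchy–Schwarz
  have hbz : Summable fun n : ℕ => ‖b n * z ^ n‖ := by
    apply Summable.of_nonneg_of_le (fun n => norm_nonneg _) (fun n => ?_)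
      ((hbsum.add hgeo).div_const 2)
    rw [norm_mul, norm_pow, ← hrdef]
    have h2 : (r ^ n) ^ 2 = (r ^ 2) ^ n := by rw [← pow_mul, ← pow_mul, Nat.mul_comm]
    nlinarith [sq_nonneg (‖b n‖ - r ^ n), sq_nonneg (r ^ n)]
  have hnorm : ‖∑' n, b n * z ^ n‖ ≤ (1 - r ^ 2)⁻¹ := by
    calc ‖∑' n, b n * z ^ n‖ ≤ ∑' n, ‖b n * z ^ n‖ := norm_tsum_le_tsum_norm hbz
      _ = ∑' n, ‖b n‖ * r ^ n := by
          exact tsum_congr fun n => by rw [norm_mul, norm_pow, hrdef]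
      _ ≤ Real.sqrt (∑' n, ‖b n‖ ^ 2) * Real.sqrt (∑' n, (r ^ n) ^ 2) := by
          have hgeo' : Summable fun n : ℕ => (r ^ n) ^ 2 := by
            simpa only [show ∀ n : ℕ, (r ^ n) ^ 2 = (r ^ 2) ^ n from fun n => by
              rw [← pow_mul, ← pow_mul, Nat.mul_comm]] using hgeo
          exact tsum_cs (fun n => norm_nonneg _) (fun n => pow_nonneg hr0 n) hbsum hgeo'
      _ = (1 - r ^ 2)⁻¹ := by
          have e : ∑' n : ℕ, (r ^ n) ^ 2 = (1 - r ^ 2)⁻¹ := by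
            rw [← hgsum]
            exact tsum_congr fun n => by rw [← pow_mul, ← pow_mul, Nat.mul_comm]
          rw [key2, e, ← Real.sqrt_mul (le_of_lt (inv_pos.mpr hr2')),
            ← sq, Real.sqrt_sq (le_of_lt (inv_pos.mpr hr2'))]
  -- conclude
  rw [← hcp2] at hnorm
  rw [norm_mul, norm_inv] at hnorm
  have hc1 : ‖(1 - (r ^ 2 : ℝ) : ℂ)‖ = 1 - r ^ 2 := by
    rw [show ((1 - (r ^ 2 : ℝ) : ℂ)) = (((1 - r ^ 2 : ℝ)) : ℂ) by push_cast; ring]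
    rw [Complex.norm_real, Real.norm_eq_abs, abs_of_pos hr2']
  rw [hc1] at hnorm
  have hpos : 0 < (1 - r ^ 2)⁻¹ := inv_pos.mpr hr2'
  calc ‖∑' n, l n * z ^ n‖ = (1 - r ^ 2) * ((1 - r ^ 2)⁻¹ * ‖∑' n, l n * z ^ n‖) := by
        field_simp
    _ ≤ (1 - r ^ 2) * (1 - r ^ 2)⁻¹ := by
        apply mul_le_mul_of_nonneg_left hnorm (le_of_lt hr2')
    _ = 1 := by field_simp
end

section
/- For a sequence (λ_n)_{n≥0} of complex numbers, condition (c) holds if and only if condition (d) holds. Here condition (c) is: for every square-summable complex sequence (a_n)_{n≥0}, ∑_{n=0}^∞ |∑_{j=0}^n a_j λ_{n-j}|² = ∑_{n=0}^∞ |a_n|²; and condition (d) is: for every non-negative integer N and all (a_0,…,a_N) ∈ ℂ^{N+1}, ∑_{n=0}^N |∑_{j=0}^n a_j λ_{n-j}|² + ∑_{n=N+1}^∞ |∑_{j=0}^N a_j λ_{n-j}|² = ∑_{n=0}^N |a_n|². -/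
/-- Condition (d): for every `N` and every `(a 0, …, a N) ∈ ℂ^{N+1}`,
`∑_{n=0}^N |∑_{j=0}^n a_j λ_{n-j}|² + ∑_{n=N+1}^∞ |∑_{j=0}^N a_j λ_{n-j}|²
  = ∑_{n=0}^N |a_n|²`. -/
def ConditionD (l : ℕ → ℂ) : Prop :=
  ∀ (N : ℕ) (a : ℕ → ℂ),
    ∑ n ∈ Finset.range (N + 1), ‖∑ j ∈ Finset.range (n + 1), a j * l (n - j)‖ ^ 2
      + ∑' m : ℕ, ‖∑ j ∈ Finset.range (N + 1), a j * l (N + 1 + m - j)‖ ^ 2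
    = ∑ n ∈ Finset.range (N + 1), ‖a n‖ ^ 2

lemma norm_sq_tsum_lp {f : ℕ → ℂ} (hf : Summable fun n => ‖f n‖^2) :
    Memℓp f 2 := memℓp_gen (by simpa [Real.rpow_natCast] using hf)

lemma lp_norm_sq (F : lp (fun _ : ℕ => ℂ) 2) : ‖F‖^2 = ∑' n, ‖(F : ℕ → ℂ) n‖^2 := by
  have h := lp.norm_rpow_eq_tsum (p := 2) (by norm_num) F
  simp only [ENNReal.toReal_ofNat] at h
  rw [show ((2:ℝ)) = ((2:ℕ):ℝ) by norm_num] at h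
  simpa [Real.rpow_natCast] using h

lemma minkowski_tsum {f g : ℕ → ℂ} (hf : Summable fun n => ‖f n‖^2)
    (hg : Summable fun n => ‖g n‖^2) :
    ∑' n, ‖f n + g n‖^2 ≤ (Real.sqrt (∑' n, ‖f n‖^2) + Real.sqrt (∑' n, ‖g n‖^2))^2 := by
  set F : lp (fun _ : ℕ => ℂ) 2 := ⟨f, norm_sq_tsum_lp hf⟩ with hFdef
  set G : lp (fun _ : ℕ => ℂ) 2 := ⟨g, norm_sq_tsum_lp hg⟩ with hGdef
  have hFG : ((F + G : lp (fun _ : ℕ => ℂ) 2) : ℕ → ℂ) = fun n => f n + g n := by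
    rw [lp.coeFn_add]; rfl
  have h1 : ∑' n, ‖f n + g n‖^2 = ‖F + G‖^2 := by rw [lp_norm_sq (F + G), hFG]
  have h2 : ‖F‖^2 = ∑' n, ‖f n‖^2 := lp_norm_sq F
  have h3 : ‖G‖^2 = ∑' n, ‖g n‖^2 := lp_norm_sq G
  rw [h1, ← h2, ← h3, Real.sqrt_sq (norm_nonneg F), Real.sqrt_sq (norm_nonneg G)]
  have := norm_add_le F G
  nlinarith [norm_nonneg (F + G), norm_nonneg F, norm_nonneg G]

open Finset
set_option maxHeartbeats 1000000 in

lemma d_to_c (l : ℕ → ℂ) (hd : ConditionD l) : ConditionC l := by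
  intro a ha
  set c : ℕ → ℂ := fun n => ∑ j ∈ range (n + 1), a j * l (n - j) with hcdef
  have hPle : ∀ M : ℕ, ∑ n ∈ range M, ‖c n‖ ^ 2 ≤ ∑' n, ‖a n‖ ^ 2 := by
    intro M
    have hkey := hd M a
    have hT : 0 ≤ ∑' m : ℕ, ‖∑ j ∈ range (M + 1), a j * l (M + 1 + m - j)‖ ^ 2 :=
      tsum_nonneg fun m => by positivity
    have h1 : ∑ n ∈ range M, ‖c n‖ ^ 2 ≤ ∑ n ∈ range (M + 1), ‖c n‖ ^ 2 :=
      Finset.sum_le_sum_of_subset_of_nonneg (Finset.range_subset_range.mpr (Nat.le_succ M))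
        (fun _ _ _ => by positivity)
    have h2 : ∑ n ∈ range (M + 1), ‖a n‖ ^ 2 ≤ ∑' n, ‖a n‖ ^ 2 :=
      ha.sum_le_tsum _ (fun _ _ => by positivity)
    linarith
  have hcsum : Summable (fun n => ‖c n‖ ^ 2) :=
    summable_of_sum_range_le (fun n => by positivity) hPle
  apply le_antisymm (hcsum.tsum_le_of_sum_range_le hPle)
  apply le_of_forall_pos_le_add
  intro ε hε
  set δ : ℝ := ε / 5 with hδdef
  have hδ : 0 < δ := by positivity
  have ta := (tendsto_sum_nat_add (fun n => ‖a n‖ ^ 2)).eventually_lt_const hδ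
  have tc := (tendsto_sum_nat_add (fun n => ‖c n‖ ^ 2)).eventually_lt_const hδ
  obtain ⟨i₀, hi₀⟩ := Filter.eventually_atTop.mp (ta.and tc)
  set N := i₀ with hN
  obtain ⟨hta, htc⟩ := hi₀ (N + 1) (by omega)
  -- hta : ∑' k, ‖a (k + (N+1))‖^2 < δ ; htc : same for c
  set b : ℕ → ℂ := fun j => if j < N + 1 then 0 else a j with hb
  set dseq : ℕ → ℂ := fun n => ∑ j ∈ range (n + 1), b j * l (n - j) with hdseq
  have hashift : Summable (fun k => ‖a (k + (N + 1))‖ ^ 2) :=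
    (summable_nat_add_iff (N + 1)).mpr ha
  -- bound on the tail of dseq
  have hDbound : ∀ M : ℕ, ∑ m ∈ range M, ‖dseq (N + 1 + m)‖ ^ 2
      ≤ ∑' k, ‖a (k + (N + 1))‖ ^ 2 := by
    intro M
    have hkey := hd (N + M) b
    have hT : 0 ≤ ∑' m : ℕ, ‖∑ j ∈ range (N + M + 1), b j * l (N + M + 1 + m - j)‖ ^ 2 :=
      tsum_nonneg fun m => by positivity
    have hbsum : ∑ n ∈ range (N + M + 1), ‖b n‖ ^ 2
        = ∑ m ∈ range M, ‖a (N + 1 + m)‖ ^ 2 := by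
      rw [show N + M + 1 = (N + 1) + M by ring, Finset.sum_range_add]
      have h0 : ∑ x ∈ range (N + 1), ‖b x‖ ^ 2 = 0 :=
        Finset.sum_eq_zero fun x hx => by
          rw [mem_range] at hx; simp [hb, hx, show x ≤ N by omega]
      rw [h0, zero_add]
      refine Finset.sum_congr rfl fun x _ => ?_
      simp [hb, show ¬ (N + 1 + x < N + 1) by omega, show ¬ (N + 1 + x ≤ N) by omega]
    have hsplit : ∑ n ∈ range (N + M + 1), ‖dseq n‖ ^ 2
        = ∑ x ∈ range (N + 1), ‖dseq x‖ ^ 2 + ∑ m ∈ range M, ‖dseq (N + 1 + m)‖ ^ 2 := by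
      rw [show N + M + 1 = (N + 1) + M by ring, Finset.sum_range_add]
    have hfirst : 0 ≤ ∑ x ∈ range (N + 1), ‖dseq x‖ ^ 2 :=
      Finset.sum_nonneg fun _ _ => by positivity
    have hlast : ∑ m ∈ range M, ‖a (N + 1 + m)‖ ^ 2 ≤ ∑' k, ‖a (k + (N + 1))‖ ^ 2 := by
      have : ∑ m ∈ range M, ‖a (N + 1 + m)‖ ^ 2 = ∑ m ∈ range M, ‖a (m + (N + 1))‖ ^ 2 :=
        Finset.sum_congr rfl fun m _ => by rw [Nat.add_comm (N + 1) m]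
      rw [this]
      exact hashift.sum_le_tsum _ (fun _ _ => by positivity)
    linarith [hkey, hT]
  have hdsum : Summable (fun m => ‖dseq (N + 1 + m)‖ ^ 2) :=
    summable_of_sum_range_le (fun _ => by positivity) hDbound
  have hDle : ∑' m, ‖dseq (N + 1 + m)‖ ^ 2 ≤ ∑' k, ‖a (k + (N + 1))‖ ^ 2 :=
    hdsum.tsum_le_of_sum_range_le hDbound
  -- decomposition
  have hdecomp : ∀ m : ℕ, ∑ j ∈ range (N + 1), a j * l (N + 1 + m - j)
      = c (N + 1 + m) + -dseq (N + 1 + m) := by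
    intro m
    have h1 : ∑ j ∈ range (N + 1), a j * l (N + 1 + m - j)
        = ∑ j ∈ range (N + 1 + m + 1), (a j - b j) * l (N + 1 + m - j) := by
      rw [show ∑ j ∈ range (N + 1), a j * l (N + 1 + m - j)
          = ∑ j ∈ range (N + 1), (a j - b j) * l (N + 1 + m - j) from
        Finset.sum_congr rfl fun j hj => by
          rw [mem_range] at hj; simp [hb, hj, show j ≤ N by omega]]
      exact Finset.sum_subset (Finset.range_subset_range.mpr (by omega))
        (fun j _ hj => by
          rw [mem_range, Nat.not_lt] at hj
          have : b j = a j := by simp [hb, show ¬ (j < N + 1) by omega, show ¬ (j ≤ N) by omega]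
          rw [this]; ring)
    have h2 : c (N + 1 + m) + -dseq (N + 1 + m)
        = ∑ j ∈ range (N + 1 + m + 1), (a j - b j) * l (N + 1 + m - j) := by
      show (∑ j ∈ range (N + 1 + m + 1), a j * l (N + 1 + m - j))
          + -(∑ j ∈ range (N + 1 + m + 1), b j * l (N + 1 + m - j)) = _
      rw [← sub_eq_add_neg, ← Finset.sum_sub_distrib]
      exact Finset.sum_congr rfl fun j _ => by ring
    rw [h1, h2]
  -- summability of shifted c and use of Minkowski
  have hcshift : Summable (fun m => ‖c (N + 1 + m)‖ ^ 2) :=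
    ((summable_nat_add_iff (N + 1)).mpr hcsum).congr
      (fun m => by rw [Nat.add_comm m (N + 1)])
  have hmink := minkowski_tsum (f := fun m => c (N + 1 + m))
    (g := fun m => -dseq (N + 1 + m)) hcshift (by simpa using hdsum)
  have hcshift_eq : ∑' m, ‖c (N + 1 + m)‖ ^ 2 = ∑' k, ‖c (k + (N + 1))‖ ^ 2 :=
    tsum_congr fun m => by rw [Nat.add_comm (N + 1) m]
  have hTeq : ∑' m : ℕ, ‖∑ j ∈ range (N + 1), a j * l (N + 1 + m - j)‖ ^ 2
      = ∑' m, ‖c (N + 1 + m) + -dseq (N + 1 + m)‖ ^ 2 :=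
    tsum_congr fun m => by rw [hdecomp m]
  have hnegd : ∑' m, ‖(-dseq (N + 1 + m) : ℂ)‖ ^ 2 = ∑' m, ‖dseq (N + 1 + m)‖ ^ 2 :=
    tsum_congr fun m => by rw [norm_neg]
  have hsq1 : Real.sqrt (∑' m, ‖c (N + 1 + m)‖ ^ 2) ≤ Real.sqrt δ := by
    apply Real.sqrt_le_sqrt
    rw [hcshift_eq]; exact htc.le
  have hsq2 : Real.sqrt (∑' m, ‖(-dseq (N + 1 + m) : ℂ)‖ ^ 2) ≤ Real.sqrt δ := by
    apply Real.sqrt_le_sqrt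
    rw [hnegd]; linarith [hDle, hta.le]
  have hTle : ∑' m : ℕ, ‖∑ j ∈ range (N + 1), a j * l (N + 1 + m - j)‖ ^ 2 ≤ 4 * δ := by
    rw [hTeq]
    calc ∑' m, ‖c (N + 1 + m) + -dseq (N + 1 + m)‖ ^ 2
        ≤ (Real.sqrt (∑' m, ‖c (N + 1 + m)‖ ^ 2)
            + Real.sqrt (∑' m, ‖(-dseq (N + 1 + m) : ℂ)‖ ^ 2)) ^ 2 := hmink
      _ ≤ (Real.sqrt δ + Real.sqrt δ) ^ 2 := by
          apply pow_le_pow_left₀ (by positivity) (add_le_add hsq1 hsq2)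
      _ = 4 * δ := by
          rw [← two_mul, mul_pow, Real.sq_sqrt hδ.le]; norm_num
  -- final assembly
  have hkeyN := hd N a
  have hsplita : ∑ i ∈ range (N + 1), ‖a i‖ ^ 2 + ∑' k, ‖a (k + (N + 1))‖ ^ 2
      = ∑' n, ‖a n‖ ^ 2 := ha.sum_add_tsum_nat_add (N + 1)
  have hPC : ∑ n ∈ range (N + 1), ‖c n‖ ^ 2 ≤ ∑' n, ‖c n‖ ^ 2 :=
    hcsum.sum_le_tsum _ (fun _ _ => by positivity)
  have : δ * 5 = ε := by rw [hδdef]; ring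
  linarith [hkeyN, hta, hTle, hPC, hsplita]


set_option maxHeartbeats 800000 in
lemma c_to_d (l : ℕ → ℂ) (hc : ConditionC l) : ConditionD l := by
  intro N a
  set b : ℕ → ℂ := fun j => if j < N + 1 then a j else 0 with hb
  have hbz : ∀ j ∉ range (N + 1), b j = 0 := by
    intro j hj; simp only [mem_range, not_lt] at hj; simp [hb, Nat.not_lt.mpr hj, show ¬ (j ≤ N) by omega]
  have hbsum : Summable (fun n => ‖b n‖ ^ 2) :=
    summable_of_ne_finset_zero (s := range (N + 1)) (fun j hj => by rw [hbz j hj]; simp)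
  -- the convolution of b
  set cb : ℕ → ℂ := fun n => ∑ j ∈ range (n + 1), b j * l (n - j) with hcb
  have heq := hc b hbsum
  have hrhs : ∑' n : ℕ, ‖b n‖ ^ 2 = ∑ n ∈ range (N + 1), ‖a n‖ ^ 2 := by
    rw [tsum_eq_sum (s := range (N + 1)) (fun j hj => by rw [hbz j hj]; simp)]
    exact Finset.sum_congr rfl fun j hj => by rw [mem_range] at hj; simp [hb, hj, show j ≤ N by omega]
  -- for n ≤ N, cb n = c n (with a)
  have hlow : ∀ n ∈ range (N + 1),
      ‖cb n‖ ^ 2 = ‖∑ j ∈ range (n + 1), a j * l (n - j)‖ ^ 2 := by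
    intro n hn; rw [mem_range] at hn
    congr 2
    exact Finset.sum_congr rfl fun j hj => by
      rw [mem_range] at hj; simp [hb, show j < N + 1 by omega, show j ≤ N by omega]
  -- for n ≥ N+1, cb n = truncated sum
  have hhigh : ∀ m : ℕ, cb (m + (N + 1)) = ∑ j ∈ range (N + 1), a j * l (N + 1 + m - j) := by
    intro m
    show ∑ j ∈ range (m + (N + 1) + 1), b j * l (m + (N + 1) - j) = _
    rw [← Finset.sum_subset
      (show range (N + 1) ⊆ range (m + (N + 1) + 1) from Finset.range_subset_range.mpr (by omega))
      (fun j _ hj => by rw [hbz j hj]; ring)]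
    refine Finset.sum_congr rfl fun j hj => ?_
    rw [mem_range] at hj
    rw [show m + (N + 1) - j = N + 1 + m - j by omega]
    simp [hb, hj, show j ≤ N by omega]
  have hsum : Summable (fun n => ‖cb n‖ ^ 2) := by
    by_contra hns
    rw [tsum_eq_zero_of_not_summable hns] at heq
    have haz : ∀ n ∈ range (N + 1), a n = 0 := by
      intro n hn
      have h0 : ∑ n ∈ range (N + 1), ‖a n‖ ^ 2 = 0 := by rw [← hrhs, ← heq]
      have := (Finset.sum_eq_zero_iff_of_nonneg (fun i _ => by positivity)).mp h0 n hn
      simpa using this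
    apply hns
    have : (fun n => ‖cb n‖ ^ 2) = fun _ => (0:ℝ) := by
      funext n
      have : cb n = 0 := by
        apply Finset.sum_eq_zero
        intro j hj; rw [mem_range] at hj
        rcases lt_or_ge j (N + 1) with h | h
        · rw [hb]; simp only [if_pos h]; rw [haz j (mem_range.mpr h)]; ring
        · rw [hbz j (by simp [mem_range]; omega)]; ring
      simp [this]
    rw [this]; exact summable_zero
  have hsplit : ∑ i ∈ range (N + 1), ‖cb i‖ ^ 2 + ∑' i : ℕ, ‖cb (i + (N + 1))‖ ^ 2
      = ∑ n ∈ range (N + 1), ‖a n‖ ^ 2 :=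
    (hsum.sum_add_tsum_nat_add (N + 1)).trans (heq.trans hrhs)
  rw [← hsplit]
  congr 1
  · exact Finset.sum_congr rfl fun n hn => (hlow n hn).symm
  · apply tsum_congr; intro m; rw [hhigh m]


/-- For a complex sequence `(λ_n)`, condition (c) holds iff condition (d) holds. -/
theorem conditionC_iff_conditionD (l : ℕ → ℂ) : ConditionC l ↔ ConditionD l := by
  exact ⟨c_to_d l, d_to_c l⟩
end

section
/- For a sequence (λ_n)_{n≥0} of complex numbers, the following are equivalent: (i) condition (c) holds, i.e. for every square-summable complex sequence (a_n)_{n≥0}, ∑_{n=0}^∞ |∑_{j=0}^n a_j λ_{n-j}|² = ∑_{n=0}^∞ |a_n|²; (ii) ∑_{n=0}^∞ |λ_n|² = 1, the power series φ(z) = ∑_{n=0}^∞ λ_n z^n converges on the open unit disk 𝔻 = {z ∈ ℂ : |z| < 1}, and |φ(z)| ≤ 1 for all z ∈ 𝔻. -/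
open Filter Finset Complex

noncomputable section

namespace InnerSeqAux

/-- Cauchy–Schwarz summability: product of two square-summable nonneg sequences is summable. -/
lemma summable_mul_of_sq {u v : ℕ → ℝ} (h0u : ∀ n, 0 ≤ u n) (h0v : ∀ n, 0 ≤ v n)
    (hu : Summable fun n => u n ^ 2) (hv : Summable fun n => v n ^ 2) :
    Summable fun n => u n * v n := by
  refine Summable.of_nonneg_of_le (fun n => mul_nonneg (h0u n) (h0v n))
    (fun n => ?_) (((hu.add hv).div_const 2))
  have h := sq_nonneg (u n - v n)
  have : u n * v n ≤ (u n ^ 2 + v n ^ 2) / 2 := by nlinarith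
  simpa using this

/-- Cauchy–Schwarz for tsums of nonneg sequences. -/
lemma tsum_mul_le_sqrt_mul_sqrt {u v : ℕ → ℝ} (h0u : ∀ n, 0 ≤ u n) (h0v : ∀ n, 0 ≤ v n)
    (hu : Summable fun n => u n ^ 2) (hv : Summable fun n => v n ^ 2) :
    ∑' n, u n * v n ≤ Real.sqrt (∑' n, u n ^ 2) * Real.sqrt (∑' n, v n ^ 2) := by
  refine Real.tsum_le_of_sum_range_le (fun n => mul_nonneg (h0u n) (h0v n)) (fun N => ?_)
  have h1 : (∑ i ∈ range N, u i * v i) ^ 2 ≤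
      (∑ i ∈ range N, u i ^ 2) * ∑ i ∈ range N, v i ^ 2 :=
    Finset.sum_mul_sq_le_sq_mul_sq _ _ _
  have h2 : (∑ i ∈ range N, u i ^ 2) ≤ ∑' n, u n ^ 2 :=
    Summable.sum_le_tsum _ (fun n _ => sq_nonneg _) hu
  have h3 : (∑ i ∈ range N, v i ^ 2) ≤ ∑' n, v n ^ 2 :=
    Summable.sum_le_tsum _ (fun n _ => sq_nonneg _) hv
  have hUnn : (0:ℝ) ≤ ∑' n, u n ^ 2 := tsum_nonneg fun n => sq_nonneg _
  have h4 : (∑ i ∈ range N, u i * v i) ^ 2 ≤ (∑' n, u n ^ 2) * ∑' n, v n ^ 2 :=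
    h1.trans (mul_le_mul h2 h3 (Finset.sum_nonneg fun n _ => sq_nonneg _) hUnn)
  have hs : 0 ≤ ∑ i ∈ range N, u i * v i :=
    Finset.sum_nonneg fun n _ => mul_nonneg (h0u n) (h0v n)
  calc ∑ i ∈ range N, u i * v i
      = Real.sqrt ((∑ i ∈ range N, u i * v i) ^ 2) := (Real.sqrt_sq hs).symm
    _ ≤ Real.sqrt ((∑' n, u n ^ 2) * ∑' n, v n ^ 2) := Real.sqrt_le_sqrt h4
    _ = _ := Real.sqrt_mul (tsum_nonneg fun n => sq_nonneg _) _




/-- The primitive `N`-th root of unity. -/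
def upt (N : ℕ) : ℂ := Complex.exp ((2 * Real.pi / N : ℝ) * Complex.I)

lemma norm_upt (N : ℕ) : ‖upt N‖ = 1 := by
  simp [upt, Complex.norm_exp]

lemma upt_ne (N : ℕ) : upt N ≠ 0 := Complex.exp_ne_zero _

lemma upt_pow_N (N : ℕ) (hN : N ≠ 0) : upt N ^ N = 1 := by
  rw [upt, ← Complex.exp_nat_mul]
  have hNe : (N:ℝ) ≠ 0 := Nat.cast_ne_zero.mpr hN
  have hNC : (N:ℂ) ≠ 0 := Nat.cast_ne_zero.mpr hN
  have : (N:ℂ) * ((2 * Real.pi / N : ℝ) * Complex.I) = 2 * Real.pi * Complex.I := by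
    push_cast
    field_simp
  rw [this, Complex.exp_two_pi_mul_I]

lemma upt_zpow_eq_one_iff (N : ℕ) (hN : N ≠ 0) (d : ℤ) :
    upt N ^ d = 1 ↔ (N:ℤ) ∣ d := by
  have hNe : (N:ℝ) ≠ 0 := Nat.cast_ne_zero.mpr hN
  have hNC : (N:ℂ) ≠ 0 := Nat.cast_ne_zero.mpr hN
  have hpi : (Real.pi:ℂ) ≠ 0 := by
    exact_mod_cast Complex.ofReal_ne_zero.mpr Real.pi_ne_zero
  rw [upt, ← Complex.exp_int_mul, Complex.exp_eq_one_iff]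
  constructor
  · rintro ⟨t, ht⟩
    push_cast at ht
    have key : (d:ℂ) = t * N := by
      have h2 : (2 * (Real.pi:ℂ) * Complex.I) * d = (2 * (Real.pi:ℂ) * Complex.I) * (t * N) := by
        field_simp at ht
        linear_combination (2 * (Real.pi:ℂ) * Complex.I) * ht
      have := mul_left_cancel₀ (by simp [hpi, Complex.I_ne_zero, Real.pi_ne_zero]
        : (2 * (Real.pi:ℂ) * Complex.I) ≠ 0) h2
      exact this
    have : d = t * N := by exact_mod_cast key
    exact ⟨t, by linarith [this]⟩
  · rintro ⟨s, rfl⟩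
    refine ⟨s, ?_⟩
    push_cast
    field_simp

lemma geom_avg (N : ℕ) (hN : N ≠ 0) (m n : ℕ) :
    ∑ k ∈ range N, (upt N ^ m * (upt N ^ n)⁻¹) ^ k
      = if (N:ℤ) ∣ ((m:ℤ) - n) then (N:ℂ) else 0 := by
  have hv : upt N ^ m * (upt N ^ n)⁻¹ = upt N ^ ((m:ℤ) - n) := by
    rw [zpow_sub₀ (upt_ne N), zpow_natCast, zpow_natCast, div_eq_mul_inv]
  rw [hv]
  by_cases hdvd : (N:ℤ) ∣ ((m:ℤ) - n)
  · rw [if_pos hdvd, (upt_zpow_eq_one_iff N hN _).mpr hdvd]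
    simp
  · rw [if_neg hdvd]
    have hne : upt N ^ ((m:ℤ) - n) ≠ 1 := fun h => hdvd ((upt_zpow_eq_one_iff N hN _).mp h)
    rw [geom_sum_eq hne]
    have hpow : (upt N ^ ((m:ℤ) - n)) ^ N = 1 := by
      rw [← zpow_natCast _ N, ← zpow_mul, mul_comm, zpow_mul, zpow_natCast, upt_pow_N N hN,
        one_zpow]
    rw [hpow]
    simp


set_option maxHeartbeats 2000000 in
lemma avg_tendsto (c : ℕ → ℂ) (r : ℝ) (hr : 0 ≤ r)
    (hc : Summable fun n => ‖c n‖ * r ^ n) :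
    Tendsto (fun N : ℕ => (N : ℝ)⁻¹ * ∑ k ∈ range N,
        ‖∑' n : ℕ, c n * ((r : ℂ) * upt N ^ k) ^ n‖ ^ 2)
      atTop (nhds (∑' n : ℕ, ‖c n‖ ^ 2 * r ^ (2 * n))) := by
  classical
  set cr : ℕ → ℝ := fun n => ‖c n‖ * r ^ n with hcr_def
  have hcr0 : ∀ n, 0 ≤ cr n := fun n => mul_nonneg (norm_nonneg _) (pow_nonneg hr _)
  have hP : Summable fun p : ℕ × ℕ => cr p.1 * cr p.2 :=
    hc.mul_of_nonneg hc (fun n => hcr0 n) (fun n => hcr0 n)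
  set T : ℝ := ∑' n, cr n with hT_def
  set D : ℝ := ∑' n : ℕ, ‖c n‖ ^ 2 * r ^ (2 * n) with hD_def
  set A : ℕ → ℝ := fun N => (N : ℝ)⁻¹ * ∑ k ∈ range N,
      ‖∑' n : ℕ, c n * ((r : ℂ) * upt N ^ k) ^ n‖ ^ 2 with hA_def
  have hkey : ∀ n, ‖c n‖ ^ 2 * r ^ (2 * n) = cr n * cr n := by
    intro n
    rw [two_mul, pow_add, sq]
    simp only [hcr_def]
    ring
  -- the main estimate
  have claim : ∀ N : ℕ, 1 ≤ N → |A N - D| ≤ 2 * T * ∑' n, cr (n + N) := by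
    intro N hN1
    have hN : N ≠ 0 := Nat.one_le_iff_ne_zero.mp hN1
    have hNC : (N:ℂ) ≠ 0 := Nat.cast_ne_zero.mpr hN
    set u : ℂ := upt N with hu_def
    set z : ℕ → ℂ := fun k => (r:ℂ) * u ^ k with hz_def
    have hzn : ∀ k, ‖z k‖ = r := by
      intro k
      show ‖(r:ℂ) * u ^ k‖ = r
      rw [norm_mul, norm_pow, hu_def, norm_upt, one_pow, mul_one, Complex.norm_real,
        Real.norm_eq_abs, _root_.abs_of_nonneg hr]
    have hnorm_term : ∀ k n, ‖c n * z k ^ n‖ = cr n := by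
      intro k n
      rw [norm_mul, norm_pow, hzn]
    have hsum1 : ∀ k, Summable fun n => ‖c n * z k ^ n‖ := by
      intro k
      simp only [hnorm_term]
      exact hc
    set g : ℕ → ℂ := fun k => ∑' n, c n * z k ^ n with hg_def
    have hconj : ∀ k, (starRingEnd ℂ) (g k)
        = ∑' n, (starRingEnd ℂ) (c n) * ((starRingEnd ℂ) (z k)) ^ n := by
      intro k
      rw [show (starRingEnd ℂ) (g k) = star (g k) from rfl, hg_def, tsum_star]
      exact tsum_congr fun n => by simp [star_pow]
    have hsum2 : ∀ k, Summable fun n =>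
        ‖(starRingEnd ℂ) (c n) * ((starRingEnd ℂ) (z k)) ^ n‖ := by
      intro k
      have : ∀ n, ‖(starRingEnd ℂ) (c n) * ((starRingEnd ℂ) (z k)) ^ n‖ = cr n := by
        intro n
        rw [norm_mul, norm_pow, RCLike.norm_conj, RCLike.norm_conj, hzn]
      simp only [this]
      exact hc
    have hprod : ∀ k, g k * (starRingEnd ℂ) (g k) = ∑' (p : ℕ × ℕ),
        (c p.1 * z k ^ p.1) * ((starRingEnd ℂ) (c p.2) * ((starRingEnd ℂ) (z k)) ^ p.2) := by
      intro k
      rw [hconj k, hg_def]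
      exact tsum_mul_tsum_of_summable_norm (f := fun n => c n * z k ^ n)
        (g := fun n => (starRingEnd ℂ) (c n) * ((starRingEnd ℂ) (z k)) ^ n)
        (hsum1 k) (hsum2 k)
    have hsummand : ∀ k, Summable fun p : ℕ × ℕ =>
        (c p.1 * z k ^ p.1) * ((starRingEnd ℂ) (c p.2) * ((starRingEnd ℂ) (z k)) ^ p.2) :=
      fun k => summable_mul_of_summable_norm (f := fun n => c n * z k ^ n)
        (g := fun n => (starRingEnd ℂ) (c n) * ((starRingEnd ℂ) (z k)) ^ n)
        (hsum1 k) (hsum2 k)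
    -- compute the inner k-sum for each pair p
    have hconj_u : (starRingEnd ℂ) u = u⁻¹ := by
      have h1 : u * (starRingEnd ℂ) u = 1 := by
        rw [Complex.mul_conj]
        rw [Complex.normSq_eq_norm_sq]
        norm_cast
        rw [hu_def, norm_upt]
        norm_num
      exact eq_inv_of_mul_eq_one_left (by rw [mul_comm]; exact h1)
    have hconj_z : ∀ k, (starRingEnd ℂ) (z k) = (r:ℂ) * (u⁻¹) ^ k := by
      intro k
      rw [hz_def]
      simp only [map_mul, map_pow, Complex.conj_ofReal, hconj_u]
    have hinner : ∀ p : ℕ × ℕ, ∑ k ∈ range N,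
        (c p.1 * z k ^ p.1) * ((starRingEnd ℂ) (c p.2) * ((starRingEnd ℂ) (z k)) ^ p.2)
        = c p.1 * (starRingEnd ℂ) (c p.2) * (r:ℂ) ^ (p.1 + p.2)
          * (if (N:ℤ) ∣ ((p.1:ℤ) - (p.2:ℤ)) then (N:ℂ) else 0) := by
      rintro ⟨m, n⟩
      have hterm : ∀ k, (c m * z k ^ m) * ((starRingEnd ℂ) (c n) * ((starRingEnd ℂ) (z k)) ^ n)
          = (c m * (starRingEnd ℂ) (c n) * (r:ℂ) ^ (m + n)) * (u ^ m * (u⁻¹) ^ n) ^ k := by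
        intro k
        rw [hconj_z k, hz_def]
        simp only [pow_add]
        ring
      calc ∑ k ∈ range N, (c m * z k ^ m) *
            ((starRingEnd ℂ) (c n) * ((starRingEnd ℂ) (z k)) ^ n)
          = ∑ k ∈ range N, (c m * (starRingEnd ℂ) (c n) * (r:ℂ) ^ (m + n))
              * (u ^ m * (u⁻¹) ^ n) ^ k := Finset.sum_congr rfl fun k _ => hterm k
        _ = (c m * (starRingEnd ℂ) (c n) * (r:ℂ) ^ (m + n))
              * ∑ k ∈ range N, (u ^ m * (u⁻¹) ^ n) ^ k := by rw [Finset.mul_sum]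
        _ = _ := by rw [hu_def, inv_pow, geom_avg N hN m n]
    -- assemble the complex-valued average
    set Fc : ℕ × ℕ → ℂ := fun p => c p.1 * (starRingEnd ℂ) (c p.2) * (r:ℂ) ^ (p.1 + p.2)
      * (if (N:ℤ) ∣ ((p.1:ℤ) - (p.2:ℤ)) then (N:ℂ) else 0) with hFc_def
    set Fd : ℕ × ℕ → ℂ := fun p => c p.1 * (starRingEnd ℂ) (c p.2) * (r:ℂ) ^ (p.1 + p.2)
      * (if p.1 = p.2 then (1:ℂ) else 0) with hFd_def
    have hnormFc : ∀ p : ℕ × ℕ, ‖Fc p‖ ≤ cr p.1 * cr p.2 * N := by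
      rintro ⟨m, n⟩
      simp only [hFc_def]
      rw [norm_mul, norm_mul, norm_mul]
      have h1 : ‖(r:ℂ) ^ (m + n)‖ = r ^ m * r ^ n := by
        rw [norm_pow, Complex.norm_real, Real.norm_eq_abs, _root_.abs_of_nonneg hr, pow_add]
      have h2 : ‖(if (N:ℤ) ∣ ((m:ℤ) - (n:ℤ)) then (N:ℂ) else 0)‖ ≤ (N:ℝ) := by
        split <;> simp
      rw [RCLike.norm_conj, h1]
      calc ‖c m‖ * ‖c n‖ * (r ^ m * r ^ n) * ‖(if (N:ℤ) ∣ ((m:ℤ) - (n:ℤ)) then (N:ℂ) else 0)‖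
          ≤ ‖c m‖ * ‖c n‖ * (r ^ m * r ^ n) * N := by
            apply mul_le_mul_of_nonneg_left h2
            positivity
        _ = cr m * cr n * N := by simp only [hcr_def]; ring
    have hFc_sum : Summable Fc :=
      Summable.of_norm (Summable.of_nonneg_of_le (fun p => norm_nonneg _) hnormFc
        (by simpa using hP.mul_right (N:ℝ)))
    have hnormFd : ∀ p : ℕ × ℕ, ‖Fd p‖ ≤ cr p.1 * cr p.2 := by
      rintro ⟨m, n⟩
      simp only [hFd_def]
      rw [norm_mul, norm_mul, norm_mul]
      have h1 : ‖(r:ℂ) ^ (m + n)‖ = r ^ m * r ^ n := by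
        rw [norm_pow, Complex.norm_real, Real.norm_eq_abs, _root_.abs_of_nonneg hr, pow_add]
      have h2 : ‖(if m = n then (1:ℂ) else 0)‖ ≤ 1 := by split <;> simp
      rw [RCLike.norm_conj, h1]
      calc ‖c m‖ * ‖c n‖ * (r ^ m * r ^ n) * ‖(if m = n then (1:ℂ) else 0)‖
          ≤ ‖c m‖ * ‖c n‖ * (r ^ m * r ^ n) * 1 := by
            apply mul_le_mul_of_nonneg_left h2
            positivity
        _ = cr m * cr n := by simp only [hcr_def]; ring
    have hFd_sum : Summable Fd :=
      Summable.of_norm (Summable.of_nonneg_of_le (fun p => norm_nonneg _) hnormFd hP)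
    have hsum_swap : ∑ k ∈ range N, (g k * (starRingEnd ℂ) (g k)) = ∑' p : ℕ × ℕ, Fc p := by
      calc ∑ k ∈ range N, (g k * (starRingEnd ℂ) (g k))
          = ∑ k ∈ range N, ∑' p : ℕ × ℕ, (c p.1 * z k ^ p.1) *
              ((starRingEnd ℂ) (c p.2) * ((starRingEnd ℂ) (z k)) ^ p.2) :=
            Finset.sum_congr rfl fun k _ => hprod k
        _ = ∑' p : ℕ × ℕ, ∑ k ∈ range N, (c p.1 * z k ^ p.1) *
              ((starRingEnd ℂ) (c p.2) * ((starRingEnd ℂ) (z k)) ^ p.2) :=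
            (Summable.tsum_finsetSum fun k _ => hsummand k).symm
        _ = ∑' p : ℕ × ℕ, Fc p := tsum_congr fun p => by rw [hinner p]
    have hg_real : ∀ k, g k * (starRingEnd ℂ) (g k) = ((‖g k‖ ^ 2 : ℝ) : ℂ) := by
      intro k
      rw [Complex.mul_conj]
      norm_cast
      rw [Complex.normSq_eq_norm_sq]
    have hsumk : ((∑ k ∈ range N, ‖g k‖ ^ 2 : ℝ) : ℂ) = ∑' p : ℕ × ℕ, Fc p := by
      rw [← hsum_swap, Complex.ofReal_sum]
      exact Finset.sum_congr rfl fun k _ => (hg_real k).symm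
    -- diagonal part
    have hdiag_inj : Function.Injective (fun n : ℕ => ((n, n) : ℕ × ℕ)) := by
      intro a b h
      exact (Prod.mk.injEq _ _ _ _).mp h |>.1
    have hdiag_supp : Function.support Fd ⊆ Set.range (fun n : ℕ => ((n, n) : ℕ × ℕ)) := by
      rintro ⟨m, n⟩ hp
      simp only [hFd_def, Function.mem_support] at hp
      by_cases h : m = n
      · exact ⟨m, by rw [h]⟩
      · exact absurd (by simp [h]) hp
    have hFd_eq : ∑' p : ℕ × ℕ, Fd p = ((D : ℝ) : ℂ) := by
      rw [← Function.Injective.tsum_eq hdiag_inj hdiag_supp]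
      have hterm : ∀ n : ℕ, Fd (n, n) = ((‖c n‖ ^ 2 * r ^ (2 * n) : ℝ) : ℂ) := by
        intro n
        simp only [hFd_def, if_pos rfl, mul_one]
        rw [Complex.mul_conj]
        push_cast
        rw [Complex.normSq_eq_norm_sq, ← two_mul]
        norm_cast
        rw [mul_one]
      rw [tsum_congr hterm, ← Complex.ofReal_tsum, hD_def]
    -- the difference
    set w : ℕ × ℕ → ℂ := fun p => (if (N:ℤ) ∣ ((p.1:ℤ) - (p.2:ℤ)) then (1:ℂ) else 0)
      - (if p.1 = p.2 then (1:ℂ) else 0) with hw_def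
    have hEdecomp : (N:ℂ)⁻¹ * (∑' p : ℕ × ℕ, Fc p) - ∑' p : ℕ × ℕ, Fd p
        = ∑' p : ℕ × ℕ, (c p.1 * (starRingEnd ℂ) (c p.2) * (r:ℂ) ^ (p.1 + p.2) * w p) := by
      rw [← tsum_mul_left, ← Summable.tsum_sub (hFc_sum.mul_left _) hFd_sum]
      refine tsum_congr fun p => ?_
      rcases p with ⟨m, n⟩
      simp only [hFc_def, hFd_def, hw_def]
      have hCN : (N:ℂ)⁻¹ * (c m * (starRingEnd ℂ) (c n) * (r:ℂ) ^ (m + n) * N)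
          = c m * (starRingEnd ℂ) (c n) * (r:ℂ) ^ (m + n) := by
        field_simp
      split_ifs with h h2 h2
      · rw [mul_one, hCN, sub_self, sub_self, mul_zero]
      · rw [mul_zero, sub_zero, sub_zero, mul_one, hCN]
      · exact absurd (by rw [h2]; simp : (N:ℤ) ∣ ((m:ℤ) - (n:ℤ))) h
      · simp
    have hwnorm : ∀ p : ℕ × ℕ, ‖c p.1 * (starRingEnd ℂ) (c p.2) * (r:ℂ) ^ (p.1 + p.2) * w p‖
        ≤ (if N ≤ p.1 then cr p.1 * cr p.2 else 0) + (if N ≤ p.2 then cr p.1 * cr p.2 else 0) := by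
      rintro ⟨m, n⟩
      have hr1 : ‖(r:ℂ) ^ (m + n)‖ = r ^ m * r ^ n := by
        rw [norm_pow, Complex.norm_real, Real.norm_eq_abs, _root_.abs_of_nonneg hr, pow_add]
      have hCval : ‖c m * (starRingEnd ℂ) (c n) * (r:ℂ) ^ (m + n)‖ = cr m * cr n := by
        rw [norm_mul, norm_mul, RCLike.norm_conj, hr1]
        simp only [hcr_def]
        ring
      have hnn1 : (0:ℝ) ≤ (if N ≤ m then cr m * cr n else 0) := by
        split
        · exact mul_nonneg (hcr0 m) (hcr0 n)
        · exact le_refl 0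
      have hnn2 : (0:ℝ) ≤ (if N ≤ n then cr m * cr n else 0) := by
        split
        · exact mul_nonneg (hcr0 m) (hcr0 n)
        · exact le_refl 0
      by_cases h2 : m = n
      · have hw0 : w (m, n) = 0 := by
          simp only [hw_def]
          rw [if_pos (by rw [h2]; simp : (N:ℤ) ∣ ((m:ℤ) - (n:ℤ))), if_pos h2, sub_self]
        rw [hw0, mul_zero, norm_zero]
        exact add_nonneg hnn1 hnn2
      · by_cases h : (N:ℤ) ∣ ((m:ℤ) - (n:ℤ))
        · have hw1 : w (m, n) = 1 := by
            simp only [hw_def]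
            rw [if_pos h, if_neg h2, sub_zero]
          rw [hw1, mul_one, hCval]
          have habs2 : (N:ℤ) ≤ |(m:ℤ) - (n:ℤ)| :=
            Int.le_of_dvd (abs_pos.mpr (sub_ne_zero.mpr
              (by exact_mod_cast h2 : ((m:ℤ)) ≠ (n:ℤ)))) ((dvd_abs _ _).mpr h)
          have hor : N ≤ m ∨ N ≤ n := by
            rcases abs_cases ((m:ℤ) - (n:ℤ)) with ⟨he, _⟩ | ⟨he, _⟩ <;> omega
          rcases hor with h' | h'
          · rw [if_pos h']
            linarith [hnn2]
          · rw [if_pos h']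
            linarith [hnn1]
        · have hw0 : w (m, n) = 0 := by
            simp only [hw_def, if_neg h, if_neg h2, sub_zero]
          rw [hw0, mul_zero, norm_zero]
          exact add_nonneg hnn1 hnn2
    -- summabilities of the bounds
    have hB1 : Summable (fun p : ℕ × ℕ => if N ≤ p.1 then cr p.1 * cr p.2 else 0) := by
      refine Summable.of_nonneg_of_le (fun p => ?_) (fun p => ?_) hP
      · split
        · exact mul_nonneg (hcr0 _) (hcr0 _)
        · exact le_refl 0
      · split
        · exact le_refl _
        · exact mul_nonneg (hcr0 _) (hcr0 _)
    have hB2 : Summable (fun p : ℕ × ℕ => if N ≤ p.2 then cr p.1 * cr p.2 else 0) := by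
      refine Summable.of_nonneg_of_le (fun p => ?_) (fun p => ?_) hP
      · split
        · exact mul_nonneg (hcr0 _) (hcr0 _)
        · exact le_refl 0
      · split
        · exact le_refl _
        · exact mul_nonneg (hcr0 _) (hcr0 _)
    have hwsum : Summable fun p : ℕ × ℕ =>
        ‖c p.1 * (starRingEnd ℂ) (c p.2) * (r:ℂ) ^ (p.1 + p.2) * w p‖ :=
      Summable.of_nonneg_of_le (fun p => norm_nonneg _) hwnorm (hB1.add hB2)
    have hcrN : Summable fun n : ℕ => (if N ≤ n then cr n else 0) := by
      refine Summable.of_nonneg_of_le (fun n => ?_) (fun n => ?_) hc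
      · split
        · exact hcr0 n
        · exact le_refl 0
      · split
        · exact le_refl _
        · exact hcr0 n
    have hcrN0 : ∀ n, 0 ≤ (if N ≤ n then cr n else 0) := by
      intro n
      split
      · exact hcr0 n
      · exact le_refl 0
    have htail_eq : ∑' n : ℕ, (if N ≤ n then cr n else 0) = ∑' k : ℕ, cr (k + N) := by
      have hsupp : Function.support (fun n : ℕ => if N ≤ n then cr n else 0)
          ⊆ Set.range (fun k : ℕ => k + N) := by
        intro x hx
        simp only [Function.mem_support] at hx
        have hNx : N ≤ x := by
          by_contra hc2
          exact hx (if_neg hc2)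
        exact ⟨x - N, Nat.sub_add_cancel hNx⟩
      have hst := Function.Injective.tsum_eq (add_left_injective N)
        (f := fun n : ℕ => if N ≤ n then cr n else 0) hsupp
      rw [← hst]
      refine tsum_congr fun k => ?_
      show (if N ≤ k + N then cr (k + N) else 0) = cr (k + N)
      rw [if_pos (Nat.le_add_left N k)]
    have hB1sum : ∑' p : ℕ × ℕ, (if N ≤ p.1 then cr p.1 * cr p.2 else 0)
        = (∑' k : ℕ, cr (k + N)) * T := by
      have hpt : ∀ p : ℕ × ℕ, (if N ≤ p.1 then cr p.1 * cr p.2 else 0)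
          = (if N ≤ p.1 then cr p.1 else 0) * cr p.2 := by
        intro p
        split
        · rfl
        · rw [zero_mul]
      rw [tsum_congr hpt, ← Summable.tsum_mul_tsum (f := fun n : ℕ => if N ≤ n then cr n else 0)
        (g := fun n : ℕ => cr n) hcrN hc
        (hcrN.mul_of_nonneg hc (fun n => hcrN0 n) (fun n => hcr0 n)), htail_eq]
    have hB2sum : ∑' p : ℕ × ℕ, (if N ≤ p.2 then cr p.1 * cr p.2 else 0)
        = T * (∑' k : ℕ, cr (k + N)) := by
      have hpt : ∀ p : ℕ × ℕ, (if N ≤ p.2 then cr p.1 * cr p.2 else 0)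
          = cr p.1 * (if N ≤ p.2 then cr p.2 else 0) := by
        intro p
        split
        · rfl
        · rw [mul_zero]
      rw [tsum_congr hpt, ← Summable.tsum_mul_tsum (f := fun n : ℕ => cr n)
        (g := fun n : ℕ => if N ≤ n then cr n else 0) hc hcrN
        (hc.mul_of_nonneg hcrN (fun n => hcr0 n) (fun n => hcrN0 n)), htail_eq]
    -- final assembly for the claim
    have hAN : ((A N : ℝ) : ℂ) = (N:ℂ)⁻¹ * ∑' p : ℕ × ℕ, Fc p := by
      have hA' : A N = (N:ℝ)⁻¹ * ∑ k ∈ range N, ‖g k‖ ^ 2 := by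
        simp only [hA_def, hg_def, hz_def, hu_def]
      rw [hA', Complex.ofReal_mul, hsumk, Complex.ofReal_inv, Complex.ofReal_natCast]
    have habs3 : |A N - D| = ‖((A N - D : ℝ) : ℂ)‖ := by
      rw [Complex.norm_real, Real.norm_eq_abs]
    have hADc : ((A N - D : ℝ) : ℂ)
        = (N:ℂ)⁻¹ * (∑' p : ℕ × ℕ, Fc p) - ∑' p : ℕ × ℕ, Fd p := by
      rw [Complex.ofReal_sub, hAN, ← hFd_eq]
    rw [habs3, hADc, hEdecomp]
    calc ‖∑' p : ℕ × ℕ, (c p.1 * (starRingEnd ℂ) (c p.2) * (r:ℂ) ^ (p.1 + p.2) * w p)‖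
        ≤ ∑' p : ℕ × ℕ, ‖c p.1 * (starRingEnd ℂ) (c p.2) * (r:ℂ) ^ (p.1 + p.2) * w p‖ :=
          norm_tsum_le_tsum_norm hwsum
      _ ≤ ∑' p : ℕ × ℕ, ((if N ≤ p.1 then cr p.1 * cr p.2 else 0)
            + (if N ≤ p.2 then cr p.1 * cr p.2 else 0)) :=
          Summable.tsum_le_tsum hwnorm hwsum (hB1.add hB2)
      _ = (∑' k : ℕ, cr (k + N)) * T + T * (∑' k : ℕ, cr (k + N)) := by
          rw [Summable.tsum_add hB1 hB2, hB1sum, hB2sum]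
      _ = 2 * T * ∑' n : ℕ, cr (n + N) := by ring
  -- conclude from the estimate
  have hT0 : Tendsto (fun N : ℕ => ∑' n : ℕ, cr (n + N)) atTop (nhds 0) :=
    tendsto_sum_nat_add cr
  have hBt : Tendsto (fun N : ℕ => 2 * T * ∑' n : ℕ, cr (n + N)) atTop (nhds 0) := by
    have h := hT0.const_mul (2 * T)
    simpa [mul_comm] using h
  have h1 : Tendsto (fun N : ℕ => |A N - D|) atTop (nhds 0) :=
    squeeze_zero' (Eventually.of_forall fun N => abs_nonneg _)
      (Filter.eventually_atTop.2 ⟨1, fun N hN => claim N hN⟩) hBt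
  have h2 : Tendsto (fun N : ℕ => A N - D) atTop (nhds 0) := by
    rw [tendsto_zero_iff_norm_tendsto_zero]
    simpa [Real.norm_eq_abs] using h1
  have h3 := h2.add_const D
  simpa using h3

lemma norm_r_upt (r : ℝ) (hr : 0 ≤ r) (N k : ℕ) : ‖(r:ℂ) * upt N ^ k‖ = r := by
  rw [norm_mul, norm_pow, norm_upt, one_pow, mul_one, Complex.norm_real,
    Real.norm_eq_abs, _root_.abs_of_nonneg hr]

lemma tsum_sq_le_of_norm_le {c a : ℕ → ℂ} {r : ℝ} (hr : 0 ≤ r)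
    (hc : Summable fun n => ‖c n‖ * r ^ n) (ha : Summable fun n => ‖a n‖ * r ^ n)
    (h : ∀ z : ℂ, ‖z‖ = r → ‖∑' n : ℕ, c n * z ^ n‖ ≤ ‖∑' n : ℕ, a n * z ^ n‖) :
    ∑' n : ℕ, ‖c n‖ ^ 2 * r ^ (2 * n) ≤ ∑' n : ℕ, ‖a n‖ ^ 2 * r ^ (2 * n) := by
  refine le_of_tendsto_of_tendsto' (avg_tendsto c r hr hc) (avg_tendsto a r hr ha) fun N => ?_
  have hN0 : (0:ℝ) ≤ (N : ℝ)⁻¹ := by positivity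
  refine mul_le_mul_of_nonneg_left (Finset.sum_le_sum fun k _ => ?_) hN0
  exact pow_le_pow_left₀ (norm_nonneg _) (h _ (norm_r_upt r hr N k)) 2

lemma summable_sq_le_of_norm_le {c a : ℕ → ℂ} {B : ℝ}
    (hcb : ∀ n, ‖c n‖ ≤ B)
    (hc : ∀ r : ℝ, 0 ≤ r → r < 1 → Summable fun n => ‖c n‖ * r ^ n)
    (ha2 : Summable fun n => ‖a n‖ ^ 2)
    (ha : ∀ r : ℝ, 0 ≤ r → r < 1 → Summable fun n => ‖a n‖ * r ^ n)
    (h : ∀ z : ℂ, ‖z‖ < 1 → ‖∑' n : ℕ, c n * z ^ n‖ ≤ ‖∑' n : ℕ, a n * z ^ n‖) :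
    Summable (fun n => ‖c n‖ ^ 2) ∧ ∑' n : ℕ, ‖c n‖ ^ 2 ≤ ∑' n : ℕ, ‖a n‖ ^ 2 := by
  have hB0 : 0 ≤ B := le_trans (norm_nonneg _) (hcb 0)
  have key : ∀ J : ℕ, ∑ n ∈ range J, ‖c n‖ ^ 2 ≤ ∑' n : ℕ, ‖a n‖ ^ 2 := by
    intro J
    set rs : ℕ → ℝ := fun i => 1 - ((i:ℝ) + 1)⁻¹ with hrs_def
    have hrs0 : ∀ i, 0 ≤ rs i := by
      intro i
      have h1 : ((i:ℝ) + 1)⁻¹ ≤ 1 := by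
        rw [inv_le_one_iff₀]
        right
        linarith [Nat.cast_nonneg (α := ℝ) i]
      simp only [hrs_def]
      linarith
    have hrs1 : ∀ i, rs i < 1 := by
      intro i
      have h1 : 0 < ((i:ℝ) + 1)⁻¹ := by positivity
      simp only [hrs_def]
      linarith
    have hrs_lim : Tendsto rs atTop (nhds 1) := by
      have h1 : Tendsto (fun i : ℕ => ((i:ℝ) + 1)⁻¹) atTop (nhds 0) := by
        simpa using tendsto_one_div_add_atTop_nhds_zero_nat (𝕜 := ℝ)
      have := (tendsto_const_nhds (x := (1:ℝ)) (f := atTop)).sub h1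
      simpa using this
    have step : ∀ i : ℕ, ∑ n ∈ range J, ‖c n‖ ^ 2 * rs i ^ (2 * n) ≤ ∑' n : ℕ, ‖a n‖ ^ 2 := by
      intro i
      have hr0 := hrs0 i
      have hr1 := hrs1 i
      have hsumc : Summable fun n => ‖c n‖ ^ 2 * rs i ^ (2 * n) := by
        refine Summable.of_nonneg_of_le (fun n => by positivity) (fun n => ?_)
          (((hc _ hr0 hr1).mul_left B))
        have h1 : rs i ^ n ≤ 1 := pow_le_one₀ hr0 hr1.le
        calc ‖c n‖ ^ 2 * rs i ^ (2 * n) = (‖c n‖ * (‖c n‖ * rs i ^ n)) * rs i ^ n := by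
              rw [two_mul, pow_add]; ring
          _ ≤ (B * (‖c n‖ * rs i ^ n)) * 1 := by
              apply mul_le_mul
              · exact mul_le_mul_of_nonneg_right (hcb n)
                  (mul_nonneg (norm_nonneg _) (pow_nonneg hr0 _))
              · exact h1
              · positivity
              · positivity
          _ = B * (‖c n‖ * rs i ^ n) := by ring
      have hsuma : Summable fun n => ‖a n‖ ^ 2 * rs i ^ (2 * n) := by
        refine Summable.of_nonneg_of_le (fun n => by positivity) (fun n => ?_) ha2
        have h1 : rs i ^ (2 * n) ≤ 1 := pow_le_one₀ hr0 hr1.le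
        calc ‖a n‖ ^ 2 * rs i ^ (2 * n) ≤ ‖a n‖ ^ 2 * 1 :=
              mul_le_mul_of_nonneg_left h1 (sq_nonneg _)
          _ = ‖a n‖ ^ 2 := mul_one _
      calc ∑ n ∈ range J, ‖c n‖ ^ 2 * rs i ^ (2 * n)
          ≤ ∑' n : ℕ, ‖c n‖ ^ 2 * rs i ^ (2 * n) :=
            Summable.sum_le_tsum _ (fun n _ => by positivity) hsumc
        _ ≤ ∑' n : ℕ, ‖a n‖ ^ 2 * rs i ^ (2 * n) :=
            tsum_sq_le_of_norm_le hr0 (hc _ hr0 hr1) (ha _ hr0 hr1)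
              (fun z hz => h z (by rw [hz]; exact hr1))
        _ ≤ ∑' n : ℕ, ‖a n‖ ^ 2 := by
            refine Summable.tsum_le_tsum (fun n => ?_) hsuma ha2
            have h1 : rs i ^ (2 * n) ≤ 1 := pow_le_one₀ hr0 hr1.le
            calc ‖a n‖ ^ 2 * rs i ^ (2 * n) ≤ ‖a n‖ ^ 2 * 1 :=
                  mul_le_mul_of_nonneg_left h1 (sq_nonneg _)
              _ = ‖a n‖ ^ 2 := mul_one _
    have hlim : Tendsto (fun i : ℕ => ∑ n ∈ range J, ‖c n‖ ^ 2 * rs i ^ (2 * n)) atTop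
        (nhds (∑ n ∈ range J, ‖c n‖ ^ 2)) := by
      have : ∀ n ∈ range J, Tendsto (fun i : ℕ => ‖c n‖ ^ 2 * rs i ^ (2 * n)) atTop
          (nhds (‖c n‖ ^ 2)) := by
        intro n _
        have h1 : Tendsto (fun i : ℕ => rs i ^ (2 * n)) atTop (nhds 1) := by
          simpa using hrs_lim.pow (2 * n)
        have := h1.const_mul (‖c n‖ ^ 2)
        simpa using this
      simpa using tendsto_finset_sum (range J) this
    exact le_of_tendsto hlim (Eventually.of_forall step)
  exact ⟨summable_of_sum_range_le (fun n => sq_nonneg _) key,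
    Real.tsum_le_of_sum_range_le (fun n => sq_nonneg _) key⟩

/-! ### Shifted sequences and autocorrelation -/

/-- Coefficients of `z^j · φ(z)`. -/
def X (l : ℕ → ℂ) (j : ℕ) : ℕ → ℂ := fun n => if j ≤ n then l (n - j) else 0

/-- Autocorrelation of the sequence `l`. -/
def rho (l : ℕ → ℂ) (d : ℕ) : ℂ := ∑' k : ℕ, l (k + d) * (starRingEnd ℂ) (l k)

variable {l : ℕ → ℂ}

lemma X_apply_add (j n : ℕ) : X l j (n + j) = l n := by
  simp only [X, if_pos (Nat.le_add_left j n)]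
  congr 1
  omega

lemma X_apply_lt {j n : ℕ} (h : n < j) : X l j n = 0 := if_neg (by omega)

lemma X_zero_apply (n : ℕ) : X l 0 n = l n := by
  simp [X]

lemma not_range_lt {j x : ℕ} (hx : x ∉ Set.range (fun k : ℕ => k + j)) : x < j := by
  by_contra h
  exact hx ⟨x - j, Nat.sub_add_cancel (by omega)⟩

lemma summable_X_sq (hl : Summable fun n => ‖l n‖ ^ 2) (j : ℕ) :
    Summable fun n => ‖X l j n‖ ^ 2 := by
  have hvan : ∀ x ∉ Set.range (fun k : ℕ => k + j), ‖X l j x‖ ^ 2 = 0 := by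
    intro x hx
    rw [X_apply_lt (not_range_lt hx), norm_zero]
    norm_num
  refine (Function.Injective.summable_iff (add_left_injective j) hvan).mp ?_
  have heq : ((fun n => ‖X l j n‖ ^ 2) ∘ (fun k : ℕ => k + j)) = fun k => ‖l k‖ ^ 2 :=
    funext fun k => by simp [Function.comp, X_apply_add]
  rw [heq]
  exact hl

lemma tsum_X_sq (j : ℕ) : ∑' n, ‖X l j n‖ ^ 2 = ∑' n, ‖l n‖ ^ 2 := by
  have hvan : Function.support (fun n => ‖X l j n‖ ^ 2) ⊆ Set.range (fun k : ℕ => k + j) := by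
    intro x hx
    simp only [Function.mem_support] at hx
    by_contra h
    rw [X_apply_lt (not_range_lt h), norm_zero] at hx
    exact hx (by norm_num)
  rw [← Function.Injective.tsum_eq (add_left_injective j) hvan]
  exact tsum_congr fun k => by rw [X_apply_add]

lemma summable_norm_X_mul (hl : Summable fun n => ‖l n‖ ^ 2) (j j' : ℕ) :
    Summable fun n => ‖X l j n‖ * ‖X l j' n‖ :=
  summable_mul_of_sq (fun n => norm_nonneg _) (fun n => norm_nonneg _)
    (summable_X_sq hl j) (summable_X_sq hl j')

lemma summable_X_mul_conj (hl : Summable fun n => ‖l n‖ ^ 2) (j j' : ℕ) :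
    Summable fun n => X l j n * (starRingEnd ℂ) (X l j' n) := by
  refine Summable.of_norm ?_
  have heq : ∀ n, ‖X l j n * (starRingEnd ℂ) (X l j' n)‖ = ‖X l j n‖ * ‖X l j' n‖ := by
    intro n
    rw [norm_mul, RCLike.norm_conj]
  simp only [heq]
  exact summable_norm_X_mul hl j j'

lemma tsum_X_mul_conj (hl : Summable fun n => ‖l n‖ ^ 2) {j j' : ℕ} (hjj : j ≤ j') :
    ∑' n, X l j n * (starRingEnd ℂ) (X l j' n) = rho l (j' - j) := by
  have hvan : Function.support (fun n => X l j n * (starRingEnd ℂ) (X l j' n))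
      ⊆ Set.range (fun k : ℕ => k + j') := by
    intro x hx
    simp only [Function.mem_support] at hx
    by_contra h
    rw [X_apply_lt (not_range_lt h), map_zero, mul_zero] at hx
    exact hx rfl
  rw [← Function.Injective.tsum_eq (add_left_injective j') hvan]
  refine tsum_congr fun k => ?_
  have h1 : X l j' (k + j') = l k := X_apply_add j' k
  have h2 : X l j (k + j') = l (k + (j' - j)) := by
    simp only [X, if_pos (by omega : j ≤ k + j')]
    congr 1
    omega
  rw [h1, h2]

lemma norm_sq_add_expand (u v : ℂ) :
    ‖u + v‖ ^ 2 = ‖u‖ ^ 2 + ‖v‖ ^ 2 + 2 * (u * (starRingEnd ℂ) v).re := by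
  rw [← Complex.normSq_eq_norm_sq, ← Complex.normSq_eq_norm_sq,
    ← Complex.normSq_eq_norm_sq]
  exact Complex.normSq_add u v

lemma pair_tsum_expand (hl : Summable fun n => ‖l n‖ ^ 2) (hl1 : ∑' n, ‖l n‖ ^ 2 = 1)
    (d : ℕ) (w : ℂ) :
    ∑' n, ‖X l 0 n + w * X l d n‖ ^ 2
      = 1 + ‖w‖ ^ 2 + 2 * ((starRingEnd ℂ) w * rho l d).re := by
  have h1 : ∀ n, ‖X l 0 n + w * X l d n‖ ^ 2
      = ‖X l 0 n‖ ^ 2 + ‖w‖ ^ 2 * ‖X l d n‖ ^ 2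
        + 2 * ((starRingEnd ℂ) w * (X l 0 n * (starRingEnd ℂ) (X l d n))).re := by
    intro n
    rw [norm_sq_add_expand]
    have e1 : ‖w * X l d n‖ ^ 2 = ‖w‖ ^ 2 * ‖X l d n‖ ^ 2 := by
      rw [norm_mul, mul_pow]
    have e2 : (X l 0 n * (starRingEnd ℂ) (w * X l d n))
        = (starRingEnd ℂ) w * (X l 0 n * (starRingEnd ℂ) (X l d n)) := by
      rw [map_mul]
      ring
    rw [e1, e2]
  have hcrossC : Summable fun n =>
      (starRingEnd ℂ) w * (X l 0 n * (starRingEnd ℂ) (X l d n)) :=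
    (summable_X_mul_conj hl 0 d).mul_left _
  have hcross_re : Summable fun n =>
      ((starRingEnd ℂ) w * (X l 0 n * (starRingEnd ℂ) (X l d n))).re :=
    (Complex.hasSum_re hcrossC.hasSum).summable
  have hs1 := summable_X_sq hl 0
  have hs2 := (summable_X_sq hl d).mul_left (‖w‖ ^ 2)
  calc ∑' n, ‖X l 0 n + w * X l d n‖ ^ 2
      = ∑' n, (‖X l 0 n‖ ^ 2 + ‖w‖ ^ 2 * ‖X l d n‖ ^ 2
          + 2 * ((starRingEnd ℂ) w * (X l 0 n * (starRingEnd ℂ) (X l d n))).re) :=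
        tsum_congr h1
    _ = (∑' n, ‖X l 0 n‖ ^ 2) + (∑' n, ‖w‖ ^ 2 * ‖X l d n‖ ^ 2)
          + ∑' n, 2 * ((starRingEnd ℂ) w * (X l 0 n * (starRingEnd ℂ) (X l d n))).re := by
        rw [Summable.tsum_add (hs1.add hs2) (hcross_re.mul_left 2), Summable.tsum_add hs1 hs2]
    _ = 1 + ‖w‖ ^ 2 + 2 * ((starRingEnd ℂ) w * rho l d).re := by
        congr 1
        · congr 1
          · rw [tsum_mul_left, tsum_X_sq, hl1, mul_one]
        · rw [tsum_mul_left]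
          congr 1
          rw [← Complex.re_tsum hcrossC, tsum_mul_left, tsum_X_mul_conj hl (Nat.zero_le d),
            Nat.sub_zero]

lemma rho_eq_zero_of_pair_bound (hl : Summable fun n => ‖l n‖ ^ 2)
    (hl1 : ∑' n, ‖l n‖ ^ 2 = 1)
    (hpair : ∀ d : ℕ, 1 ≤ d → ∀ w : ℂ,
      ∑' n, ‖X l 0 n + w * X l d n‖ ^ 2 ≤ 1 + ‖w‖ ^ 2)
    {d : ℕ} (hd : 1 ≤ d) : rho l d = 0 := by
  have hle := hpair d hd (rho l d)
  rw [pair_tsum_expand hl hl1 d (rho l d)] at hle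
  have hre : ((starRingEnd ℂ) (rho l d) * rho l d).re = Complex.normSq (rho l d) := by
    rw [mul_comm, Complex.mul_conj]
    exact Complex.ofReal_re _
  rw [hre] at hle
  have h0 : Complex.normSq (rho l d) ≤ 0 := by linarith
  exact Complex.normSq_eq_zero.mp (le_antisymm h0 (Complex.normSq_nonneg _))

lemma conv_eq_sum_X {a : ℕ → ℂ} {N : ℕ} (ha : ∀ j, N ≤ j → a j = 0) (n : ℕ) :
    ∑ j ∈ range (n + 1), a j * l (n - j) = ∑ j ∈ range N, a j * X l j n := by
  have e1 : ∑ j ∈ range (n + 1), a j * l (n - j) = ∑ j ∈ range (n + 1), a j * X l j n :=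
    Finset.sum_congr rfl fun j hj => by
      rw [Finset.mem_range] at hj
      simp only [X]
      rw [if_pos (by omega : j ≤ n)]
  have e2 : ∑ j ∈ range (n + 1), a j * X l j n
      = ∑ j ∈ range (max (n + 1) N), a j * X l j n :=
    Finset.sum_subset (Finset.range_subset_range.mpr (le_max_left _ _)) (fun j hjt hjs => by
      rw [Finset.mem_range] at hjt hjs
      rw [X_apply_lt (by omega), mul_zero])
  have e3 : ∑ j ∈ range N, a j * X l j n = ∑ j ∈ range (max (n + 1) N), a j * X l j n :=
    Finset.sum_subset (Finset.range_subset_range.mpr (le_max_right _ _)) (fun j hjt hjs => by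
      rw [Finset.mem_range] at hjt hjs
      rw [ha j (by omega), zero_mul])
  rw [e1, e2, ← e3]

lemma tsum_conv_finsupp (hl : Summable fun n => ‖l n‖ ^ 2) (hl1 : ∑' n, ‖l n‖ ^ 2 = 1)
    (hrho : ∀ d : ℕ, 1 ≤ d → rho l d = 0)
    {a : ℕ → ℂ} {N : ℕ} (ha : ∀ j, N ≤ j → a j = 0) :
    Summable (fun n => ‖∑ j ∈ range (n + 1), a j * l (n - j)‖ ^ 2) ∧
    ∑' n, ‖∑ j ∈ range (n + 1), a j * l (n - j)‖ ^ 2 = ∑ j ∈ range N, ‖a j‖ ^ 2 := by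
  classical
  have hG : ∀ j k : ℕ, ∑' n, X l j n * (starRingEnd ℂ) (X l k n)
      = if j = k then (1 : ℂ) else 0 := by
    intro j k
    rcases lt_trichotomy j k with h | h | h
    · rw [tsum_X_mul_conj hl h.le, hrho _ (by omega), if_neg (by omega)]
    · subst h
      rw [if_pos rfl, tsum_X_mul_conj hl le_rfl, Nat.sub_self, rho]
      have : ∀ k : ℕ, l (k + 0) * (starRingEnd ℂ) (l k) = ((‖l k‖ ^ 2 : ℝ) : ℂ) := by
        intro k
        rw [Nat.add_zero, Complex.mul_conj, Complex.normSq_eq_norm_sq]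
      rw [tsum_congr this, ← Complex.ofReal_tsum, hl1, Complex.ofReal_one]
    · rw [if_neg (by omega)]
      have h0 : ∑' n, X l k n * (starRingEnd ℂ) (X l j n) = 0 := by
        rw [tsum_X_mul_conj hl h.le, hrho _ (by omega)]
      calc ∑' n, X l j n * (starRingEnd ℂ) (X l k n)
          = star (∑' n, X l k n * (starRingEnd ℂ) (X l j n)) := by
            rw [tsum_star]
            refine tsum_congr fun n => ?_
            simp only [star_mul']
            rw [show star ((starRingEnd ℂ) (X l j n)) = X l j n from star_star _]
            rw [mul_comm]
            rfl
        _ = 0 := by rw [h0, star_zero]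
  set b : ℕ → ℂ := fun n => ∑ j ∈ range N, a j * X l j n with hb
  have hconv : ∀ n, (∑ j ∈ range (n + 1), a j * l (n - j)) = b n := conv_eq_sum_X ha
  have hsumjk : ∀ j k : ℕ, Summable fun n =>
      (a j * X l j n) * (starRingEnd ℂ) (a k * X l k n) := by
    intro j k
    have h := (summable_X_mul_conj hl j k).mul_left (a j * (starRingEnd ℂ) (a k))
    refine h.congr fun n => ?_
    simp only [map_mul]
    ring
  have htjk : ∀ j k : ℕ, ∑' n, (a j * X l j n) * (starRingEnd ℂ) (a k * X l k n)
      = a j * (starRingEnd ℂ) (a k) * (if j = k then (1 : ℂ) else 0) := by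
    intro j k
    have hpt : ∀ n, (a j * X l j n) * (starRingEnd ℂ) (a k * X l k n)
        = a j * (starRingEnd ℂ) (a k) * (X l j n * (starRingEnd ℂ) (X l k n)) := by
      intro n
      simp only [map_mul]
      ring
    rw [tsum_congr hpt, tsum_mul_left, hG j k]
  have hbb : ∀ n, b n * (starRingEnd ℂ) (b n)
      = ∑ j ∈ range N, ∑ k ∈ range N,
          (a j * X l j n) * (starRingEnd ℂ) (a k * X l k n) := by
    intro n
    simp only [hb, map_sum, Finset.sum_mul_sum]
  have hBsum : Summable fun n => b n * (starRingEnd ℂ) (b n) := by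
    refine Summable.congr ?_ (fun n => (hbb n).symm)
    exact summable_sum fun j _ => summable_sum fun k _ => hsumjk j k
  have htsum : ∑' n, b n * (starRingEnd ℂ) (b n)
      = ((∑ j ∈ range N, ‖a j‖ ^ 2 : ℝ) : ℂ) := by
    calc ∑' n, b n * (starRingEnd ℂ) (b n)
        = ∑' n, ∑ j ∈ range N, ∑ k ∈ range N,
            (a j * X l j n) * (starRingEnd ℂ) (a k * X l k n) := tsum_congr hbb
      _ = ∑ j ∈ range N, ∑' n, ∑ k ∈ range N,
            (a j * X l j n) * (starRingEnd ℂ) (a k * X l k n) :=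
          Summable.tsum_finsetSum fun j _ => summable_sum fun k _ => hsumjk j k
      _ = ∑ j ∈ range N, ∑ k ∈ range N, ∑' n,
            (a j * X l j n) * (starRingEnd ℂ) (a k * X l k n) :=
          Finset.sum_congr rfl fun j _ => Summable.tsum_finsetSum fun k _ => hsumjk j k
      _ = ∑ j ∈ range N, ∑ k ∈ range N,
            a j * (starRingEnd ℂ) (a k) * (if j = k then (1 : ℂ) else 0) :=
          Finset.sum_congr rfl fun j _ => Finset.sum_congr rfl fun k _ => htjk j k
      _ = ∑ j ∈ range N, a j * (starRingEnd ℂ) (a j) := by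
          refine Finset.sum_congr rfl fun j hj => ?_
          rw [Finset.sum_eq_single j]
          · rw [if_pos rfl, mul_one]
          · intro k _ hk
            rw [if_neg (Ne.symm hk), mul_zero]
          · intro hj2
            exact absurd hj hj2
      _ = ((∑ j ∈ range N, ‖a j‖ ^ 2 : ℝ) : ℂ) := by
          rw [Complex.ofReal_sum]
          refine Finset.sum_congr rfl fun j _ => ?_
          rw [Complex.mul_conj, Complex.normSq_eq_norm_sq]
  have hre : ∀ n, ‖b n‖ ^ 2 = (b n * (starRingEnd ℂ) (b n)).re := by
    intro n
    rw [Complex.mul_conj, Complex.ofReal_re, Complex.normSq_eq_norm_sq]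
  have hsumre : Summable fun n => ‖b n‖ ^ 2 := by
    refine Summable.congr ?_ (fun n => (hre n).symm)
    exact (Complex.hasSum_re hBsum.hasSum).summable
  constructor
  · refine hsumre.congr fun n => ?_
    rw [hconv n]
  · calc ∑' n, ‖∑ j ∈ range (n + 1), a j * l (n - j)‖ ^ 2
        = ∑' n, ‖b n‖ ^ 2 := tsum_congr fun n => by rw [hconv n]
      _ = ∑' n, (b n * (starRingEnd ℂ) (b n)).re := tsum_congr hre
      _ = (∑' n, b n * (starRingEnd ℂ) (b n)).re := (Complex.re_tsum hBsum).symm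
      _ = ∑ j ∈ range N, ‖a j‖ ^ 2 := by rw [htsum, Complex.ofReal_re]

lemma sq_lower {x y z t : ℝ} (hx : 0 ≤ x) (hy : 0 ≤ y) (hz : 0 ≤ z)
    (hzxy : x - y ≤ z) (ht : 0 < t) (ht1 : t ≤ 1) :
    (1 - t) * x ^ 2 - (1 / t) * y ^ 2 ≤ z ^ 2 := by
  have hyt : y ^ 2 ≤ (1 / t) * y ^ 2 := by
    rw [one_div]
    nlinarith [sq_nonneg y, inv_anti₀ ht ht1]
  rcases le_or_gt x y with h | h
  · nlinarith [sq_nonneg z, sq_nonneg (x - y)]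
  · have h1 : x - y ≤ z := hzxy
    have h2 : (x - y) ^ 2 ≤ z ^ 2 := by nlinarith
    have h3 : t * ((1 - t) * x ^ 2 - (1 / t) * y ^ 2) ≤ t * (x - y) ^ 2 := by
      have htne : t ≠ 0 := ne_of_gt ht
      have expand : t * ((1 - t) * x ^ 2 - (1 / t) * y ^ 2)
          = t * x ^ 2 - t ^ 2 * x ^ 2 - y ^ 2 := by
        field_simp
      nlinarith [sq_nonneg (t * x - y)]
    nlinarith

lemma conv_partial_le (hl : Summable fun n => ‖l n‖ ^ 2) (hl1 : ∑' n, ‖l n‖ ^ 2 = 1)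
    (hrho : ∀ d : ℕ, 1 ≤ d → rho l d = 0)
    {u : ℕ → ℂ} (hu : Summable fun n => ‖u n‖ ^ 2) (M : ℕ) :
    ∑ n ∈ range M, ‖∑ j ∈ range (n + 1), u j * l (n - j)‖ ^ 2 ≤ ∑' n, ‖u n‖ ^ 2 := by
  classical
  set u' : ℕ → ℂ := fun j => if j < M then u j else 0 with hu'_def
  have ha' : ∀ j, M ≤ j → u' j = 0 := fun j hj => if_neg (by omega)
  obtain ⟨hS, hT⟩ := tsum_conv_finsupp hl hl1 hrho ha'
  calc ∑ n ∈ range M, ‖∑ j ∈ range (n + 1), u j * l (n - j)‖ ^ 2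
      = ∑ n ∈ range M, ‖∑ j ∈ range (n + 1), u' j * l (n - j)‖ ^ 2 := by
        refine Finset.sum_congr rfl fun n hn => ?_
        rw [Finset.mem_range] at hn
        congr 1
        refine congrArg _ (Finset.sum_congr rfl fun j hj => ?_)
        rw [Finset.mem_range] at hj
        have : u' j = u j := if_pos (by omega)
        rw [this]
    _ ≤ ∑' n, ‖∑ j ∈ range (n + 1), u' j * l (n - j)‖ ^ 2 :=
        Summable.sum_le_tsum _ (fun n _ => sq_nonneg _) hS
    _ = ∑ j ∈ range M, ‖u' j‖ ^ 2 := hT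
    _ = ∑ j ∈ range M, ‖u j‖ ^ 2 := by
        refine Finset.sum_congr rfl fun j hj => ?_
        rw [Finset.mem_range] at hj
        have : u' j = u j := if_pos (by omega)
        rw [this]
    _ ≤ ∑' n, ‖u n‖ ^ 2 := Summable.sum_le_tsum _ (fun n _ => sq_nonneg _) hu

lemma conv_summable_le (hl : Summable fun n => ‖l n‖ ^ 2) (hl1 : ∑' n, ‖l n‖ ^ 2 = 1)
    (hrho : ∀ d : ℕ, 1 ≤ d → rho l d = 0)
    {u : ℕ → ℂ} (hu : Summable fun n => ‖u n‖ ^ 2) :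
    Summable (fun n => ‖∑ j ∈ range (n + 1), u j * l (n - j)‖ ^ 2) ∧
    ∑' n, ‖∑ j ∈ range (n + 1), u j * l (n - j)‖ ^ 2 ≤ ∑' n, ‖u n‖ ^ 2 :=
  ⟨summable_of_sum_range_le (fun n => sq_nonneg _) (conv_partial_le hl hl1 hrho hu),
   Real.tsum_le_of_sum_range_le (fun n => sq_nonneg _) (conv_partial_le hl hl1 hrho hu)⟩

lemma conv_tsum_eq (hl : Summable fun n => ‖l n‖ ^ 2) (hl1 : ∑' n, ‖l n‖ ^ 2 = 1)
    (hrho : ∀ d : ℕ, 1 ≤ d → rho l d = 0)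
    {a : ℕ → ℂ} (ha : Summable fun n => ‖a n‖ ^ 2) :
    ∑' n, ‖∑ j ∈ range (n + 1), a j * l (n - j)‖ ^ 2 = ∑' n, ‖a n‖ ^ 2 := by
  classical
  obtain ⟨hCs, hCle⟩ := conv_summable_le hl hl1 hrho ha
  refine le_antisymm hCle ?_
  -- the lower bound via truncation
  have key : ∀ (N : ℕ) (t : ℝ), 0 < t → t ≤ 1 →
      (1 - t) * (∑ j ∈ range N, ‖a j‖ ^ 2)
        - (1 / t) * ((∑' n, ‖a n‖ ^ 2) - ∑ j ∈ range N, ‖a j‖ ^ 2)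
      ≤ ∑' n, ‖∑ j ∈ range (n + 1), a j * l (n - j)‖ ^ 2 := by
    intro N t ht ht1
    set aN : ℕ → ℂ := fun j => if j < N then a j else 0 with haN_def
    set dN : ℕ → ℂ := fun j => if j < N then 0 else a j with hdN_def
    have haN0 : ∀ j, N ≤ j → aN j = 0 := fun j hj => if_neg (by omega)
    have hsplit : ∀ j, a j = aN j + dN j := by
      intro j
      by_cases h : j < N
      · simp [haN_def, hdN_def, h]
      · simp [haN_def, hdN_def, h]
    have hconv_split : ∀ n, (∑ j ∈ range (n + 1), a j * l (n - j))
        = (∑ j ∈ range (n + 1), aN j * l (n - j)) + ∑ j ∈ range (n + 1), dN j * l (n - j) := by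
      intro n
      rw [← Finset.sum_add_distrib]
      refine Finset.sum_congr rfl fun j _ => ?_
      rw [hsplit j]
      ring
    -- ℓ² facts for dN
    have hdN_sq : Summable fun j => ‖dN j‖ ^ 2 := by
      refine Summable.of_nonneg_of_le (fun j => sq_nonneg _) (fun j => ?_) ha
      by_cases h : j < N
      · simp only [hdN_def, if_pos h, norm_zero]
        simpa using sq_nonneg ‖a j‖
      · simp only [hdN_def, if_neg h]
        exact le_rfl
    have hdN_tsum : ∑' j, ‖dN j‖ ^ 2 = (∑' n, ‖a n‖ ^ 2) - ∑ j ∈ range N, ‖a j‖ ^ 2 := by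
      have h1 : ∑' j, ‖dN j‖ ^ 2 = ∑' j, ‖a (j + N)‖ ^ 2 := by
        have hvan : Function.support (fun j => ‖dN j‖ ^ 2)
            ⊆ Set.range (fun k : ℕ => k + N) := by
          intro x hx
          simp only [Function.mem_support] at hx
          by_contra h
          have hlt := not_range_lt h
          rw [show dN x = 0 from if_pos hlt] at hx
          simp at hx
        rw [← Function.Injective.tsum_eq (add_left_injective N) hvan]
        refine tsum_congr fun k => ?_
        have : dN (k + N) = a (k + N) := if_neg (by omega)
        rw [this]
      have h2 := Summable.sum_add_tsum_nat_add (f := fun n => ‖a n‖ ^ 2) N ha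
      rw [h1]
      linarith
    obtain ⟨hdC_s, hdC_le⟩ := conv_summable_le hl hl1 hrho hdN_sq
    obtain ⟨haC_s, haC_eq⟩ := tsum_conv_finsupp hl hl1 hrho haN0
    have haN_sum_eq : ∑ j ∈ range N, ‖aN j‖ ^ 2 = ∑ j ∈ range N, ‖a j‖ ^ 2 := by
      refine Finset.sum_congr rfl fun j hj => ?_
      rw [Finset.mem_range] at hj
      have : aN j = a j := if_pos (by omega)
      rw [this]
    -- pointwise lower bound
    have hpt : ∀ n, (1 - t) * ‖∑ j ∈ range (n + 1), aN j * l (n - j)‖ ^ 2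
        - (1 / t) * ‖∑ j ∈ range (n + 1), dN j * l (n - j)‖ ^ 2
        ≤ ‖∑ j ∈ range (n + 1), a j * l (n - j)‖ ^ 2 := by
      intro n
      refine sq_lower (norm_nonneg _) (norm_nonneg _) (norm_nonneg _) ?_ ht ht1
      have h3 : (∑ j ∈ range (n + 1), aN j * l (n - j))
          = (∑ j ∈ range (n + 1), a j * l (n - j)) - ∑ j ∈ range (n + 1), dN j * l (n - j) := by
        rw [hconv_split n]
        ring
      have h4 : ‖∑ j ∈ range (n + 1), aN j * l (n - j)‖
          ≤ ‖∑ j ∈ range (n + 1), a j * l (n - j)‖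
            + ‖∑ j ∈ range (n + 1), dN j * l (n - j)‖ := by
        rw [h3]
        exact norm_sub_le _ _
      linarith
    have hcomb_s : Summable fun n =>
        (1 - t) * ‖∑ j ∈ range (n + 1), aN j * l (n - j)‖ ^ 2
        - (1 / t) * ‖∑ j ∈ range (n + 1), dN j * l (n - j)‖ ^ 2 :=
      (haC_s.mul_left _).sub (hdC_s.mul_left _)
    have hsum_le := Summable.tsum_le_tsum hpt hcomb_s hCs
    rw [Summable.tsum_sub (haC_s.mul_left _) (hdC_s.mul_left _), tsum_mul_left, tsum_mul_left,
      haC_eq, haN_sum_eq] at hsum_le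
    have h5 : (1 / t) * (∑' n, ‖∑ j ∈ range (n + 1), dN j * l (n - j)‖ ^ 2)
        ≤ (1 / t) * ((∑' n, ‖a n‖ ^ 2) - ∑ j ∈ range N, ‖a j‖ ^ 2) := by
      refine mul_le_mul_of_nonneg_left ?_ (by positivity)
      rw [← hdN_tsum]
      exact hdC_le
    linarith
  refine le_of_forall_pos_le_add fun δ hδ => ?_
  have hS0 : (0:ℝ) ≤ ∑' n, ‖a n‖ ^ 2 := tsum_nonneg fun n => sq_nonneg _
  set S : ℝ := ∑' n, ‖a n‖ ^ 2 with hS_def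
  set t : ℝ := min (1/2) (δ / (3 * (S + 1))) with ht_def
  have ht0 : 0 < t := lt_min (by norm_num) (by positivity)
  have ht1 : t ≤ 1 := le_trans (min_le_left _ _) (by norm_num)
  have htS : t * S ≤ δ / 3 := by
    have h1 : t ≤ δ / (3 * (S + 1)) := min_le_right _ _
    calc t * S ≤ (δ / (3 * (S + 1))) * S := mul_le_mul_of_nonneg_right h1 hS0
      _ ≤ δ / 3 := by
        rw [div_mul_eq_mul_div, div_le_div_iff₀ (by positivity) (by norm_num)]
        nlinarith
  have htail : Tendsto (fun N => ∑ j ∈ range N, ‖a j‖ ^ 2) atTop (nhds S) :=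
    ha.hasSum.tendsto_sum_nat
  have hε : (0:ℝ) < min (δ/3) (t * (δ/3)) := lt_min (by positivity) (by positivity)
  obtain ⟨N, hN⟩ := Metric.tendsto_atTop.mp htail (min (δ/3) (t * (δ/3))) hε
  have hNs := hN N le_rfl
  rw [Real.dist_eq] at hNs
  have hSN_le : ∑ j ∈ range N, ‖a j‖ ^ 2 ≤ S := Summable.sum_le_tsum _ (fun n _ => sq_nonneg _) ha
  have h1 : S - ∑ j ∈ range N, ‖a j‖ ^ 2 ≤ min (δ/3) (t * (δ/3)) := by
    have habs : |∑ j ∈ range N, ‖a j‖ ^ 2 - S| = S - ∑ j ∈ range N, ‖a j‖ ^ 2 := by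
      rw [abs_of_nonpos (by linarith)]
      ring
    rw [habs] at hNs
    exact le_of_lt hNs
  have hkeyN := key N t ht0 ht1
  have hSN0 : (0:ℝ) ≤ ∑ j ∈ range N, ‖a j‖ ^ 2 := Finset.sum_nonneg fun j _ => sq_nonneg _
  have htake1 : (1 - t) * (∑ j ∈ range N, ‖a j‖ ^ 2)
      ≥ (∑ j ∈ range N, ‖a j‖ ^ 2) - t * S := by nlinarith
  have htake2 : (1 / t) * (S - ∑ j ∈ range N, ‖a j‖ ^ 2) ≤ δ/3 := by
    have h2 : S - ∑ j ∈ range N, ‖a j‖ ^ 2 ≤ t * (δ/3) := le_trans h1 (min_le_right _ _)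
    calc (1/t) * (S - ∑ j ∈ range N, ‖a j‖ ^ 2) ≤ (1/t) * (t * (δ/3)) :=
          mul_le_mul_of_nonneg_left h2 (by positivity)
      _ = δ/3 := by field_simp
  have hSN_ge : (∑ j ∈ range N, ‖a j‖ ^ 2) ≥ S - δ/3 := by
    have := le_trans h1 (min_le_left _ _)
    linarith
  linarith [hkeyN]

lemma summable_norm_mul_pow (hl : Summable fun n => ‖l n‖ ^ 2) {r : ℝ}
    (h0 : 0 ≤ r) (h1 : r < 1) : Summable fun n => ‖l n‖ * r ^ n := by
  refine summable_mul_of_sq (fun n => norm_nonneg _) (fun n => pow_nonneg h0 n) hl ?_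
  have hgeo : Summable fun n : ℕ => (r ^ 2) ^ n :=
    summable_geometric_of_lt_one (by positivity) (by nlinarith)
  refine hgeo.congr fun n => ?_
  rw [← pow_mul, ← pow_mul, mul_comm]

lemma summable_X_norm_mul_pow (hl : Summable fun n => ‖l n‖ ^ 2) (j : ℕ) {r : ℝ}
    (h0 : 0 ≤ r) (h1 : r < 1) : Summable fun n => ‖X l j n‖ * r ^ n := by
  have hvan : ∀ x ∉ Set.range (fun k : ℕ => k + j), ‖X l j x‖ * r ^ x = 0 := by
    intro x hx
    rw [X_apply_lt (not_range_lt hx), norm_zero, zero_mul]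
  refine (Function.Injective.summable_iff (add_left_injective j) hvan).mp ?_
  have heq : ((fun n => ‖X l j n‖ * r ^ n) ∘ (fun k : ℕ => k + j))
      = fun k => (‖l k‖ * r ^ k) * r ^ j :=
    funext fun k => by
      simp only [Function.comp, X_apply_add, pow_add]
      ring
  rw [heq]
  exact (summable_norm_mul_pow hl h0 h1).mul_right _

lemma summable_lz (hl : Summable fun n => ‖l n‖ ^ 2) {z : ℂ} (hz : ‖z‖ < 1) :
    Summable fun n => l n * z ^ n := by
  refine Summable.of_norm ?_
  have heq : ∀ n, ‖l n * z ^ n‖ = ‖l n‖ * ‖z‖ ^ n := fun n => by rw [norm_mul, norm_pow]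
  simp only [heq]
  exact summable_norm_mul_pow hl (norm_nonneg z) hz

lemma tsum_X_mul_pow (hl : Summable fun n => ‖l n‖ ^ 2) (j : ℕ) {z : ℂ} (hz : ‖z‖ < 1) :
    Summable (fun n => X l j n * z ^ n) ∧
    ∑' n, X l j n * z ^ n = z ^ j * ∑' n, l n * z ^ n := by
  have hvan : ∀ x ∉ Set.range (fun k : ℕ => k + j), X l j x * z ^ x = 0 := by
    intro x hx
    rw [X_apply_lt (not_range_lt hx), zero_mul]
  have heq : ((fun n => X l j n * z ^ n) ∘ (fun k : ℕ => k + j))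
      = fun k => (l k * z ^ k) * z ^ j :=
    funext fun k => by
      simp only [Function.comp, X_apply_add, pow_add]
      ring
  constructor
  · refine (Function.Injective.summable_iff (add_left_injective j) hvan).mp ?_
    rw [heq]
    exact (summable_lz hl hz).mul_right _
  · have hvan' : Function.support (fun n => X l j n * z ^ n)
        ⊆ Set.range (fun k : ℕ => k + j) := by
      intro x hx
      simp only [Function.mem_support] at hx
      by_contra h
      exact hx (hvan x h)
    rw [← Function.Injective.tsum_eq (add_left_injective j) hvan', show
      (fun k : ℕ => X l j (k + j) * z ^ (k + j)) = fun k => (l k * z ^ k) * z ^ j from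
      funext fun k => by simp only [X_apply_add, pow_add]; ring, tsum_mul_right, mul_comm]

lemma pair_contraction (hl : Summable fun n => ‖l n‖ ^ 2) (hl1 : ∑' n, ‖l n‖ ^ 2 = 1)
    (hphi : ∀ z : ℂ, ‖z‖ < 1 →
      Summable (fun n : ℕ => l n * z ^ n) ∧ ‖∑' n : ℕ, l n * z ^ n‖ ≤ 1)
    {m m' : ℕ} (hmm : m < m') (w : ℂ) :
    Summable (fun n => ‖X l m n + w * X l m' n‖ ^ 2) ∧
    ∑' n, ‖X l m n + w * X l m' n‖ ^ 2 ≤ 1 + ‖w‖ ^ 2 := by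
  classical
  set c : ℕ → ℂ := fun n => X l m n + w * X l m' n with hc_def
  set a : ℕ → ℂ := fun n => (if n = m then (1:ℂ) else 0) + w * (if n = m' then (1:ℂ) else 0)
    with ha_def
  -- pointwise bound on c
  have hlb : ∀ k, ‖l k‖ ≤ 1 := by
    intro k
    have h1 := Summable.le_tsum hl k (fun i _ => sq_nonneg _)
    rw [hl1] at h1
    nlinarith [norm_nonneg (l k)]
  have hXb : ∀ j n, ‖X l j n‖ ≤ 1 := by
    intro j n
    by_cases h : j ≤ n
    · simp only [X, if_pos h]
      exact hlb _
    · simp only [X, if_neg h, norm_zero]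
      norm_num
  have hcb : ∀ n, ‖c n‖ ≤ 1 + ‖w‖ := by
    intro n
    simp only [hc_def]
    calc ‖X l m n + w * X l m' n‖ ≤ ‖X l m n‖ + ‖w * X l m' n‖ := norm_add_le _ _
      _ ≤ 1 + ‖w‖ := by
        rw [norm_mul]
        have h2 := hXb m' n
        have h3 := hXb m n
        nlinarith [norm_nonneg w]
  -- a is finitely supported
  have ha_van : ∀ n ∉ ({m, m'} : Finset ℕ), a n = 0 := by
    intro n hn
    simp only [Finset.mem_insert, Finset.mem_singleton] at hn
    push_neg at hn
    simp only [ha_def, if_neg hn.1, if_neg hn.2, mul_zero, add_zero]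
  have ha2 : Summable fun n => ‖a n‖ ^ 2 :=
    summable_of_ne_finset_zero (s := {m, m'}) (fun n hn => by rw [ha_van n hn]; simp)
  have ham : a m = 1 := by
    simp only [ha_def, if_neg (by omega : ¬ m = m'), mul_zero, add_zero, if_pos rfl]
    simp
  have ham' : a m' = w := by
    simp only [ha_def, if_neg (by omega : ¬ m' = m), if_pos rfl, zero_add]
    simp
  have ha_tsum : ∑' n, ‖a n‖ ^ 2 = 1 + ‖w‖ ^ 2 := by
    rw [tsum_eq_sum (s := {m, m'}) (fun n hn => by rw [ha_van n hn]; simp)]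
    rw [Finset.sum_pair (by omega : m ≠ m'), ham, ham']
    simp
  -- summability hypotheses for the comparison lemma
  have hc_r : ∀ r : ℝ, 0 ≤ r → r < 1 → Summable fun n => ‖c n‖ * r ^ n := by
    intro r h0 h1
    refine Summable.of_nonneg_of_le
      (fun n => mul_nonneg (norm_nonneg _) (pow_nonneg h0 _)) (fun n => ?_)
      (((summable_X_norm_mul_pow hl m h0 h1).add
        ((summable_X_norm_mul_pow hl m' h0 h1).mul_left ‖w‖)))
    have h2 : ‖c n‖ ≤ ‖X l m n‖ + ‖w‖ * ‖X l m' n‖ := by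
      simp only [hc_def]
      calc ‖X l m n + w * X l m' n‖ ≤ ‖X l m n‖ + ‖w * X l m' n‖ := norm_add_le _ _
        _ = ‖X l m n‖ + ‖w‖ * ‖X l m' n‖ := by rw [norm_mul]
    calc ‖c n‖ * r ^ n ≤ (‖X l m n‖ + ‖w‖ * ‖X l m' n‖) * r ^ n :=
          mul_le_mul_of_nonneg_right h2 (pow_nonneg h0 _)
      _ = ‖X l m n‖ * r ^ n + ‖w‖ * (‖X l m' n‖ * r ^ n) := by ring
  have ha_r : ∀ r : ℝ, 0 ≤ r → r < 1 → Summable fun n => ‖a n‖ * r ^ n := by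
    intro r h0 h1
    exact summable_of_ne_finset_zero (s := {m, m'})
      (fun n hn => by rw [ha_van n hn]; simp)
  -- boundary comparison
  have hcomp : ∀ z : ℂ, ‖z‖ < 1 →
      ‖∑' n, c n * z ^ n‖ ≤ ‖∑' n, a n * z ^ n‖ := by
    intro z hz
    have hXm := tsum_X_mul_pow hl m hz
    have hXm' := tsum_X_mul_pow hl m' hz
    have hc_eq : ∑' n, c n * z ^ n = (z ^ m + w * z ^ m') * ∑' n, l n * z ^ n := by
      have hpt : ∀ n, c n * z ^ n = X l m n * z ^ n + w * (X l m' n * z ^ n) := by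
        intro n
        simp only [hc_def]
        ring
      rw [tsum_congr hpt, Summable.tsum_add hXm.1 (hXm'.1.mul_left w), tsum_mul_left,
        hXm.2, hXm'.2]
      ring
    have ha_eq : ∑' n, a n * z ^ n = z ^ m + w * z ^ m' := by
      have hpt : ∀ n, a n * z ^ n
          = (if n = m then z ^ m else 0) + w * (if n = m' then z ^ m' else 0) := by
        intro n
        simp only [ha_def]
        by_cases h1 : n = m
        · subst h1
          rw [if_pos rfl, if_pos rfl, if_neg (by omega : ¬ n = m'), if_neg (by omega : ¬ n = m')]
          ring
        · by_cases h2 : n = m'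
          · subst h2
            rw [if_neg h1, if_neg h1, if_pos rfl, if_pos rfl]
            ring
          · rw [if_neg h1, if_neg h1, if_neg h2, if_neg h2]
            ring
      have hs1 : Summable fun n => (if n = m then z ^ m else (0:ℂ)) :=
        summable_of_ne_finset_zero (s := {m}) (fun n hn => if_neg (by simpa using hn))
      have hs2 : Summable fun n => (if n = m' then z ^ m' else (0:ℂ)) :=
        summable_of_ne_finset_zero (s := {m'}) (fun n hn => if_neg (by simpa using hn))
      rw [tsum_congr hpt, Summable.tsum_add hs1 (hs2.mul_left w), tsum_mul_left,
        tsum_ite_eq m (fun _ => z ^ m), tsum_ite_eq m' (fun _ => z ^ m')]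
    rw [hc_eq, ha_eq, norm_mul]
    calc ‖z ^ m + w * z ^ m'‖ * ‖∑' n, l n * z ^ n‖ ≤ ‖z ^ m + w * z ^ m'‖ * 1 :=
          mul_le_mul_of_nonneg_left (hphi z hz).2 (norm_nonneg _)
      _ = ‖z ^ m + w * z ^ m'‖ := mul_one _
  obtain ⟨hs, hle⟩ := summable_sq_le_of_norm_le hcb hc_r ha2 ha_r hcomp
  rw [ha_tsum] at hle
  exact ⟨hs, hle⟩

end InnerSeqAux

open InnerSeqAux

lemma conditionC_tsum_eq_one {l : ℕ → ℂ} (hC : ConditionC l) :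
    ∑' n : ℕ, ‖l n‖ ^ 2 = 1 := by
  classical
  set e0 : ℕ → ℂ := fun n => if n = 0 then (1:ℂ) else 0 with he0
  have he0_sum : Summable fun n => ‖e0 n‖ ^ 2 :=
    summable_of_ne_finset_zero (s := {0}) (fun n hn => by
      simp only [he0, if_neg (by simpa using hn)]
      simp)
  have hconv : ∀ n, (∑ j ∈ Finset.range (n + 1), e0 j * l (n - j)) = l n := by
    intro n
    have hpt : ∀ j, e0 j * l (n - j) = if j = 0 then l (n - j) else 0 := by
      intro j
      simp only [he0]
      split <;> simp
    rw [Finset.sum_congr rfl fun j _ => hpt j, Finset.sum_ite_eq' (Finset.range (n + 1)) 0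
      (fun j => l (n - j)), if_pos (Finset.mem_range.mpr (by omega))]
    simp
  have htse0 : ∑' n, ‖e0 n‖ ^ 2 = 1 := by
    rw [tsum_eq_sum (s := {0}) (fun n hn => by
      simp only [he0, if_neg (by simpa using hn)]
      simp)]
    simp [he0]
  have h := hC e0 he0_sum
  rw [htse0] at h
  rw [← h]
  exact tsum_congr fun n => by rw [hconv n]

/-- `(λ_n)` satisfies condition (c) iff `∑_n |λ_n|² = 1` and the power series
`∑ λ_n z^n` converges on the open unit disk with sum bounded by one there. -/
theorem conditionC_iff_norm_one_and_bounded (l : ℕ → ℂ) :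
    ConditionC l ↔
      (∑' n : ℕ, ‖l n‖ ^ 2 = 1) ∧
        ∀ z : ℂ, ‖z‖ < 1 →
          Summable (fun n : ℕ => l n * z ^ n) ∧ ‖∑' n : ℕ, l n * z ^ n‖ ≤ 1 := by
  constructor
  · intro hC
    have hl1 : ∑' n : ℕ, ‖l n‖ ^ 2 = 1 := conditionC_tsum_eq_one hC
    have hl : Summable fun n => ‖l n‖ ^ 2 := by
      by_contra h
      rw [tsum_eq_zero_of_not_summable h] at hl1
      norm_num at hl1
    refine ⟨hl1, fun z hz => ?_⟩
    refine ⟨summable_lz hl hz, ?_⟩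
    -- test against the reproducing kernel sequence
    have hz2 : ‖z‖ ^ 2 < 1 := by nlinarith [norm_nonneg z]
    have hz2' : (0:ℝ) ≤ ‖z‖ ^ 2 := sq_nonneg _
    set K : ℝ := (1 - ‖z‖ ^ 2)⁻¹ with hK_def
    have hK0 : 0 < K := by
      rw [hK_def]
      have : 0 < 1 - ‖z‖ ^ 2 := by linarith
      positivity
    set az : ℕ → ℂ := fun n => (starRingEnd ℂ) z ^ n with haz
    have haz_norm : ∀ n, ‖az n‖ ^ 2 = (‖z‖ ^ 2) ^ n := by
      intro n
      simp only [haz]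
      rw [norm_pow, RCLike.norm_conj, ← pow_mul, ← pow_mul, mul_comm]
    have haz_sum : Summable fun n => ‖az n‖ ^ 2 := by
      simp only [haz_norm]
      exact summable_geometric_of_lt_one hz2' hz2
    have haz_tsum : ∑' n, ‖az n‖ ^ 2 = K := by
      simp only [haz_norm]
      rw [tsum_geometric_of_lt_one hz2' hz2]
    have hCb := hC az haz_sum
    rw [haz_tsum] at hCb
    set b : ℕ → ℂ := fun n => ∑ j ∈ Finset.range (n + 1), az j * l (n - j) with hb_def
    have hb_sq : Summable fun n => ‖b n‖ ^ 2 := by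
      by_contra h
      rw [show (fun n => ‖b n‖ ^ 2)
        = fun n => ‖∑ j ∈ Finset.range (n + 1), az j * l (n - j)‖ ^ 2 from rfl] at h
      rw [tsum_eq_zero_of_not_summable h] at hCb
      exact absurd hCb.symm (ne_of_gt hK0)
    -- Cauchy product identity
    have hf_norm : Summable fun k : ℕ => ‖az k * z ^ k‖ := by
      have heq : ∀ k, ‖az k * z ^ k‖ = (‖z‖ ^ 2) ^ k := by
        intro k
        simp only [haz]
        rw [norm_mul, norm_pow, norm_pow, RCLike.norm_conj, ← pow_add, ← pow_mul,
          two_mul]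
      simp only [heq]
      exact summable_geometric_of_lt_one hz2' hz2
    have hg_norm : Summable fun k : ℕ => ‖l k * z ^ k‖ := by
      have heq : ∀ k, ‖l k * z ^ k‖ = ‖l k‖ * ‖z‖ ^ k := fun k => by
        rw [norm_mul, norm_pow]
      simp only [heq]
      exact summable_norm_mul_pow hl (norm_nonneg z) hz
    have hprod := tsum_mul_tsum_eq_tsum_sum_range_of_summable_norm hf_norm hg_norm
    have hinner : ∀ n, ∑ k ∈ Finset.range (n + 1), (az k * z ^ k) * (l (n - k) * z ^ (n - k))
        = b n * z ^ n := by
      intro n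
      rw [hb_def, Finset.sum_mul]
      refine Finset.sum_congr rfl fun k hk => ?_
      rw [Finset.mem_range] at hk
      have hzz : z ^ k * z ^ (n - k) = z ^ n := by
        rw [← pow_add]
        congr 1
        omega
      calc (az k * z ^ k) * (l (n - k) * z ^ (n - k))
          = az k * l (n - k) * (z ^ k * z ^ (n - k)) := by ring
        _ = az k * l (n - k) * z ^ n := by rw [hzz]
    have hfz : ∑' k : ℕ, az k * z ^ k = (1 - ((Complex.normSq z : ℝ) : ℂ))⁻¹ := by
      have heq : ∀ k, az k * z ^ k = (((Complex.normSq z : ℝ) : ℂ)) ^ k := by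
        intro k
        simp only [haz]
        rw [← mul_pow, mul_comm, Complex.mul_conj]
      rw [tsum_congr heq]
      refine tsum_geometric_of_norm_lt_one ?_
      rw [Complex.norm_real, Real.norm_eq_abs, _root_.abs_of_nonneg (Complex.normSq_nonneg z),
        Complex.normSq_eq_norm_sq]
      exact hz2
    have hkey : (1 - ((Complex.normSq z : ℝ) : ℂ))⁻¹ * (∑' n : ℕ, l n * z ^ n)
        = ∑' n : ℕ, b n * z ^ n := by
      rw [← hfz, hprod]
      exact tsum_congr fun n => hinner n
    -- norms
    have hnormb : Summable fun n => ‖b n * z ^ n‖ := by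
      have heq : ∀ n, ‖b n * z ^ n‖ = ‖b n‖ * ‖z‖ ^ n := fun n => by rw [norm_mul, norm_pow]
      simp only [heq]
      exact summable_mul_of_sq (fun n => norm_nonneg _) (fun n => pow_nonneg (norm_nonneg z) n)
        hb_sq (by
          have : Summable fun n : ℕ => (‖z‖ ^ 2) ^ n := summable_geometric_of_lt_one hz2' hz2
          refine this.congr fun n => ?_
          rw [← pow_mul, ← pow_mul, mul_comm])
    have hrhs : ‖∑' n : ℕ, b n * z ^ n‖ ≤ K := by
      calc ‖∑' n : ℕ, b n * z ^ n‖ ≤ ∑' n : ℕ, ‖b n * z ^ n‖ :=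
            norm_tsum_le_tsum_norm hnormb
        _ = ∑' n : ℕ, ‖b n‖ * ‖z‖ ^ n := tsum_congr fun n => by rw [norm_mul, norm_pow]
        _ ≤ Real.sqrt (∑' n, ‖b n‖ ^ 2) * Real.sqrt (∑' n, (‖z‖ ^ n) ^ 2) := by
            refine tsum_mul_le_sqrt_mul_sqrt (fun n => norm_nonneg _)
              (fun n => pow_nonneg (norm_nonneg z) n) hb_sq ?_
            have : Summable fun n : ℕ => (‖z‖ ^ 2) ^ n := summable_geometric_of_lt_one hz2' hz2
            refine this.congr fun n => ?_
            rw [← pow_mul, ← pow_mul, mul_comm]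
        _ = Real.sqrt K * Real.sqrt K := by
            rw [hCb]
            congr 2
            have heq : ∀ n : ℕ, (‖z‖ ^ n) ^ 2 = (‖z‖ ^ 2) ^ n := by
              intro n
              rw [← pow_mul, ← pow_mul, mul_comm]
            rw [tsum_congr heq, tsum_geometric_of_lt_one hz2' hz2]
        _ = K := Real.mul_self_sqrt hK0.le
    have hlhs : ‖(1 - ((Complex.normSq z : ℝ) : ℂ))⁻¹ * (∑' n : ℕ, l n * z ^ n)‖
        = K * ‖∑' n : ℕ, l n * z ^ n‖ := by
      rw [norm_mul, norm_inv]
      congr 1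
      rw [show (1 - ((Complex.normSq z : ℝ) : ℂ)) = (((1 - Complex.normSq z : ℝ)) : ℂ) by
        push_cast; ring]
      rw [Complex.norm_real, Real.norm_eq_abs, _root_.abs_of_nonneg (by
        rw [Complex.normSq_eq_norm_sq]
        linarith), hK_def]
      congr 1
      rw [Complex.normSq_eq_norm_sq]
    have hfinal : K * ‖∑' n : ℕ, l n * z ^ n‖ ≤ K := by
      rw [← hlhs, hkey]
      exact hrhs
    have hfinal' : K * ‖∑' n : ℕ, l n * z ^ n‖ ≤ K * 1 := by
      simpa using hfinal
    exact le_of_mul_le_mul_left hfinal' hK0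
  · rintro ⟨hl1, hphi⟩
    intro a ha
    have hl : Summable fun n => ‖l n‖ ^ 2 := by
      by_contra h
      rw [tsum_eq_zero_of_not_summable h] at hl1
      norm_num at hl1
    have hpair : ∀ d : ℕ, 1 ≤ d → ∀ w : ℂ,
        ∑' n, ‖X l 0 n + w * X l d n‖ ^ 2 ≤ 1 + ‖w‖ ^ 2 := by
      intro d hd w
      exact (pair_contraction hl hl1 hphi (by omega : 0 < d) w).2
    have hrho : ∀ d : ℕ, 1 ≤ d → rho l d = 0 := fun d hd =>
      rho_eq_zero_of_pair_bound hl hl1 hpair hd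
    exact conv_tsum_eq hl hl1 hrho ha
end
end
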